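/- arXiv:1503.04126 — 8 statements merged into one kernel-verified Lean document; each statement's English description precedes it below -/
import Mathlib

section
/- Let E : [0,∞) → [0,∞) be a non-increasing function, and suppose there exist constants α > 0 and T > 0 such that ∫_t^∞ E(s)^{α+1} ds ≤ T·E(0)^α·E(t) for all t ≥ 0. Then E(t) ≤ E(0)·((T + α·t)/(T + α·T))^{-1/α} for all t ≥ T. -/
open Real MeasureTheory Set Filter Topology

lemma aux_bernoulli {α t : ℝ} (hα : 0 < α) (ht : 0 < t) : 1 + α * (1 - t) ≤ t ^ (-α) := by
  rcases le_or_gt (1 + α * (1 - t)) 0 with h | h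
  · exact h.trans (Real.rpow_pos_of_pos ht _).le
  · have h1α : (0:ℝ) < 1 + α := by linarith
    have hgm := Real.geom_mean_le_arith_mean2_weighted
      (le_of_lt (div_pos hα h1α)) (le_of_lt (div_pos one_pos h1α)) ht.le h.le
      (by field_simp; ring)
    have hsum : α/(1+α) * t + 1/(1+α) * (1 + α * (1 - t)) = 1 := by
      field_simp; ring
    rw [hsum] at hgm
    have h2 : (t ^ (α/(1+α)) * (1 + α * (1 - t)) ^ (1/(1+α))) ^ (1+α) ≤ 1 := by
      calc (t ^ (α/(1+α)) * (1 + α * (1 - t)) ^ (1/(1+α))) ^ (1+α)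
          ≤ (1:ℝ) ^ (1+α) := Real.rpow_le_rpow (by positivity) hgm (by linarith)
        _ = 1 := Real.one_rpow _
    rw [Real.mul_rpow (by positivity) (by positivity), ← Real.rpow_mul ht.le,
      ← Real.rpow_mul h.le] at h2
    have e1 : α/(1+α) * (1+α) = α := by field_simp
    have e2 : 1/(1+α) * (1+α) = 1 := by field_simp
    rw [e1, e2, Real.rpow_one] at h2
    have htα : 0 < t ^ α := Real.rpow_pos_of_pos ht α
    rw [Real.rpow_neg ht.le]
    have h3 : 1 + α * (1 - t) ≤ 1 / t ^ α := (le_div_iff₀ htα).2 (by nlinarith)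
    simpa [one_div] using h3

lemma aux_tangent {α x y : ℝ} (hα : 0 < α) (hx : 0 < x) (hy : 0 < y) :
    x ^ (-α) + α * x ^ (-α - 1) * (x - y) ≤ y ^ (-α) := by
  have hb := aux_bernoulli hα (div_pos hy hx)
  have hxa : (0:ℝ) < x ^ (-α) := Real.rpow_pos_of_pos hx _
  have hdiv : (y / x) ^ (-α) = y ^ (-α) / x ^ (-α) := Real.div_rpow hy.le hx.le _
  have h2 : x ^ (-α) * (1 + α * (1 - y / x)) ≤ y ^ (-α) := by
    have hmul := mul_le_mul_of_nonneg_left hb hxa.le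
    rw [hdiv] at hmul
    have hcan : x ^ (-α) * (y ^ (-α) / x ^ (-α)) = y ^ (-α) := by
      field_simp
    rwa [hcan] at hmul
  have hx1 : x ^ (-α - 1) = x ^ (-α) / x := by
    rw [Real.rpow_sub hx, Real.rpow_one]
  calc x ^ (-α) + α * x ^ (-α - 1) * (x - y)
      = x ^ (-α) * (1 + α * (1 - y / x)) := by
        rw [hx1]; field_simp
    _ ≤ y ^ (-α) := h2

lemma aux_gronwall (F : ℝ → ℝ) (c α s : ℝ) (hα : 0 < α) (hc : 0 < c) (hs : 0 ≤ s)
    (hFcont : ContinuousOn F (Icc 0 s)) (hFs : 0 < F s)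
    (hF_anti : ∀ a b, 0 ≤ a → a ≤ b → F b ≤ F a)
    (hstep : ∀ x z, 0 ≤ x → x ≤ z → (z - x) * (F z / c) ^ (α+1) ≤ F x - F z) :
    F 0 ^ (-α) + α * c ^ (-(α+1)) * s ≤ F s ^ (-α) := by
  set K := α * c ^ (-(α+1)) with hK
  have hKpos : 0 < K := mul_pos hα (Real.rpow_pos_of_pos hc _)
  have hFpos : ∀ x, 0 ≤ x → x ≤ s → 0 < F x := fun x hx hxs =>
    lt_of_lt_of_le hFs (hF_anti x s hx hxs)
  have main : ∀ ⦃x⦄, x ∈ Icc 0 s →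
      -(F x ^ (-α)) ≤ -(F 0 ^ (-α)) - K * x := by
    apply image_le_of_liminf_slope_right_le_deriv_boundary
      (f := fun u => -(F u ^ (-α))) (B := fun u => -(F 0 ^ (-α)) - K * u)
      (B' := fun _ => -K)
    · exact (hFcont.rpow_const (fun x hx => Or.inl (hFpos x hx.1 hx.2).ne')).neg
    · simp
    · fun_prop
    · intro x hx
      have hd : HasDerivAt (fun u => -(F 0 ^ (-α)) - K * u) (-K) x := by
        simpa using ((hasDerivAt_id x).const_mul K).const_sub (-(F 0 ^ (-α)))
      exact hd.hasDerivWithinAt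
    · intro x hx r hr
      have hx0 : 0 ≤ x := hx.1
      have hxs : x < s := hx.2
      have hFx : 0 < F x := hFpos x hx0 hxs.le
      have hne : (𝓝[Ioc x s] x).NeBot := by
        apply mem_closure_iff_nhdsWithin_neBot.1
        rw [closure_Ioc hxs.ne]
        exact ⟨le_rfl, hxs.le⟩
      have hpt : ∀ z ∈ Ioc x s,
          slope (fun u => -(F u ^ (-α))) x z ≤ -α * F x ^ (-α - 1) * (F z / c) ^ (α+1) := by
        intro z hz
        have hzx : 0 < z - x := sub_pos.2 hz.1
        have hFz : 0 < F z := hFpos z (hx0.trans hz.1.le) hz.2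
        have htan := aux_tangent hα hFx hFz
        have hst := hstep x z hx0 hz.1.le
        have hcoef : 0 ≤ α * F x ^ (-α - 1) := by positivity
        have h2 : α * F x ^ (-α - 1) * ((z - x) * (F z / c) ^ (α+1))
            ≤ α * F x ^ (-α - 1) * (F x - F z) := mul_le_mul_of_nonneg_left hst hcoef
        have hnum : -(F z ^ (-α)) - -(F x ^ (-α))
            ≤ (z - x) * (-α * F x ^ (-α - 1) * (F z / c) ^ (α+1)) := by nlinarith
        rw [slope_def_field]
        rw [div_le_iff₀ hzx]
        nlinarith
      have hFtend : Tendsto F (𝓝[Ioc x s] x) (𝓝 (F x)) :=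
        (hFcont.continuousWithinAt ⟨hx0, hxs.le⟩).mono
          (fun z hz => ⟨hx0.trans hz.1.le, hz.2⟩)
      have hlim : Tendsto (fun z => -α * F x ^ (-α - 1) * (F z / c) ^ (α+1))
          (𝓝[Ioc x s] x) (𝓝 (-α * F x ^ (-α - 1) * (F x / c) ^ (α+1))) :=
        ((hFtend.div_const c).rpow_const (Or.inr (by linarith))).const_mul _
      have hval : -α * F x ^ (-α - 1) * (F x / c) ^ (α+1) = -K := by
        have h7 : F x ^ (-α - 1) * F x ^ (α+1) = 1 := by
          rw [← Real.rpow_add hFx]; norm_num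
        have h8 : c ^ (-(α+1)) = (c ^ (α+1))⁻¹ := Real.rpow_neg hc.le _
        rw [Real.div_rpow hFx.le hc.le, hK, h8]
        calc -α * F x ^ (-α - 1) * (F x ^ (α+1) / c ^ (α+1))
            = -(α * ((F x ^ (-α - 1) * F x ^ (α+1)) / c ^ (α+1))) := by ring
          _ = -(α * (1 / c ^ (α+1))) := by rw [h7]
          _ = -(α * (c ^ (α+1))⁻¹) := by rw [one_div]
      have hev : ∀ᶠ z in 𝓝[Ioc x s] x, slope (fun u => -(F u ^ (-α))) x z < r := by
        have h9 : ∀ᶠ z in 𝓝[Ioc x s] x,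
            -α * F x ^ (-α - 1) * (F z / c) ^ (α+1) < r :=
          hlim.eventually_lt_const (by rw [hval]; exact hr)
        filter_upwards [h9, self_mem_nhdsWithin] with z h9z hzmem
        exact lt_of_le_of_lt (hpt z hzmem) h9z
      exact (hev.frequently).filter_mono (nhdsWithin_mono x Set.Ioc_subset_Ioi_self)
  have hmain := main (right_mem_Icc.2 hs)
  linarith

set_option maxHeartbeats 1000000 in
theorem stmt_0 (E : ℝ → ℝ) (α T : ℝ)
    (hE_nonneg : ∀ t ≥ (0:ℝ), 0 ≤ E t)
    (hE_anti : AntitoneOn E (Set.Ici 0))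
    (hα : 0 < α) (hT : 0 < T)
    (hInt : ∀ t ≥ (0:ℝ), IntegrableOn (fun s => E s ^ (α + 1)) (Set.Ioi t))
    (hIneq : ∀ t ≥ (0:ℝ), ∫ s in Set.Ioi t, E s ^ (α + 1) ≤ T * E 0 ^ α * E t) :
    ∀ t ≥ T, E t ≤ E 0 * ((T + α * t) / (T + α * T)) ^ (-(1 / α)) := by
  intro t ht
  have ht0 : 0 < t := lt_of_lt_of_le hT ht
  have hQpos : 0 < (T + α * t) / (T + α * T) :=
    div_pos (by nlinarith) (by nlinarith)
  have hRHSnn : 0 ≤ E 0 * ((T + α * t) / (T + α * T)) ^ (-(1 / α)) :=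
    mul_nonneg (hE_nonneg 0 le_rfl) (Real.rpow_nonneg hQpos.le _)
  rcases (hE_nonneg t ht0.le).eq_or_lt with ha0 | hapos
  · rw [← ha0]; exact hRHSnn
  have he : 0 < E 0 :=
    lt_of_lt_of_le hapos (hE_anti (le_refl (0:ℝ)) (le_of_lt ht0) ht0.le)
  set c := T * E 0 ^ α with hc_def
  have hc : 0 < c := mul_pos hT (Real.rpow_pos_of_pos he α)
  set g : ℝ → ℝ := fun s => E s ^ (α + 1) with hg_def
  set F : ℝ → ℝ := fun u => ∫ s in Set.Ioi u, g s with hF_def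
  have hg_nonneg : ∀ s, 0 ≤ s → 0 ≤ g s := fun s hs =>
    Real.rpow_nonneg (hE_nonneg s hs) _
  have hg_anti : ∀ a b, 0 ≤ a → a ≤ b → g b ≤ g a := fun a b ha hab =>
    Real.rpow_le_rpow (hE_nonneg b (ha.trans hab))
      (hE_anti ha (ha.trans hab) hab) (by linarith)
  have hgint : ∀ u, 0 ≤ u → IntegrableOn g (Set.Ioi u) := fun u hu => hInt u hu
  have hsplit : ∀ a b, 0 ≤ a → a ≤ b → F a = (∫ s in Set.Ioc a b, g s) + F b := by
    intro a b ha hab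
    have := setIntegral_union (Set.Ioc_disjoint_Ioi le_rfl) measurableSet_Ioi
      ((hgint a ha).mono_set Set.Ioc_subset_Ioi_self) (hgint b (ha.trans hab))
      (μ := volume) (f := g)
    rw [Set.Ioc_union_Ioi_eq_Ioi hab] at this
    exact this
  have hIoc_lower : ∀ a b, 0 ≤ a → a ≤ b → (b - a) * g b ≤ ∫ s in Set.Ioc a b, g s := by
    intro a b ha hab
    have h1 : ∫ _ in Set.Ioc a b, g b ∂volume ≤ ∫ s in Set.Ioc a b, g s := by
      apply setIntegral_mono_on (integrableOn_const measure_Ioc_lt_top.ne)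
        ((hgint a ha).mono_set Set.Ioc_subset_Ioi_self) measurableSet_Ioc
      intro x hx
      exact hg_anti x b (ha.trans hx.1.le) hx.2
    rw [setIntegral_const] at h1
    rw [Real.volume_real_Ioc_of_le hab, smul_eq_mul] at h1
    exact h1
  have hIoc_nonneg : ∀ a b, 0 ≤ a → 0 ≤ ∫ s in Set.Ioc a b, g s := by
    intro a b ha
    apply setIntegral_nonneg measurableSet_Ioc
    intro x hx
    exact hg_nonneg x (ha.trans hx.1.le)
  have hF_le : ∀ u, 0 ≤ u → F u ≤ c * E u := fun u hu => hIneq u hu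
  have hF_nonneg : ∀ u, 0 ≤ u → 0 ≤ F u := fun u hu =>
    setIntegral_nonneg measurableSet_Ioi (fun x hx => hg_nonneg x (hu.trans (le_of_lt hx)))
  have hF_anti : ∀ a b, 0 ≤ a → a ≤ b → F b ≤ F a := by
    intro a b ha hab
    rw [hsplit a b ha hab]
    linarith [hIoc_nonneg a b ha]
  have hstep : ∀ x z, 0 ≤ x → x ≤ z → (z - x) * (F z / c) ^ (α+1) ≤ F x - F z := by
    intro x z hx hxz
    have h1 : (z - x) * g z ≤ F x - F z := by
      rw [hsplit x z hx hxz]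
      linarith [hIoc_lower x z hx hxz]
    have h2 : (F z / c) ^ (α+1) ≤ g z := by
      have hd : F z / c ≤ E z := (div_le_iff₀ hc).2 (by
        have := hF_le z (hx.trans hxz); linarith)
      exact Real.rpow_le_rpow (div_nonneg (hF_nonneg z (hx.trans hxz)) hc.le) hd (by linarith)
    have hzx : 0 ≤ z - x := sub_nonneg.2 hxz
    calc (z - x) * (F z / c) ^ (α+1) ≤ (z - x) * g z :=
          mul_le_mul_of_nonneg_left h2 hzx
      _ ≤ F x - F z := h1
  have hF_cont : ContinuousOn F (Set.Ici 0) := by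
    have L : ∀ a b, 0 ≤ a → a ≤ b → F a - F b ≤ g 0 * (b - a) := by
      intro a b ha hab
      have h1 : ∫ s in Set.Ioc a b, g s ≤ ∫ _ in Set.Ioc a b, g 0 ∂volume := by
        apply setIntegral_mono_on ((hgint a ha).mono_set Set.Ioc_subset_Ioi_self)
          (integrableOn_const measure_Ioc_lt_top.ne) measurableSet_Ioc
        intro x hx
        exact hg_anti 0 x le_rfl (ha.trans hx.1.le)
      rw [setIntegral_const, Real.volume_real_Ioc_of_le hab,
        smul_eq_mul] at h1
      rw [hsplit a b ha hab]
      nlinarith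
    apply LipschitzOnWith.continuousOn (K := ⟨g 0, hg_nonneg 0 le_rfl⟩)
    apply LipschitzOnWith.of_dist_le_mul
    intro x hx y hy
    have key : ∀ a b : ℝ, 0 ≤ a → a ≤ b → |F a - F b| ≤ g 0 * |a - b| := by
      intro a b ha hab
      have h2 := L a b ha hab
      have h3 := hF_anti a b ha hab
      rw [abs_of_nonneg (by linarith), abs_of_nonpos (by linarith : a - b ≤ 0)]
      nlinarith
    rw [Real.dist_eq, Real.dist_eq]
    show |F x - F y| ≤ g 0 * |x - y|
    rcases le_total x y with hxy | hxy
    · exact key x y hx hxy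
    · have hk := key y x hy hxy
      rwa [abs_sub_comm (F y) (F x), abs_sub_comm y x] at hk
  -- setup for Gronwall
  have hgt_eq : g t = E t ^ (α + 1) := rfl
  clear_value F
  have h1α : (0:ℝ) < 1 + α := by linarith
  set s' := (t - T) / (1 + α) with hs'_def
  have hs'0 : 0 ≤ s' := div_nonneg (by linarith) h1α.le
  have hs't : s' < t := by
    rw [hs'_def, div_lt_iff₀ h1α]; nlinarith
  have hgt_pos : 0 < g t := by rw [hgt_eq]; exact Real.rpow_pos_of_pos hapos _
  have hFs'_lb : (t - s') * g t ≤ F s' := by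
    rw [hsplit s' t hs'0 hs't.le]
    linarith [hIoc_lower s' t hs'0 hs't.le, hF_nonneg t ht0.le]
  have hFs' : 0 < F s' :=
    lt_of_lt_of_le (mul_pos (by linarith) hgt_pos) hFs'_lb
  have key := aux_gronwall F c α s' hα hc hs'0
    (hF_cont.mono (fun x hx => hx.1)) hFs' hF_anti
    (fun x z hx hxz => hstep x z hx hxz)
  have hF0pos : 0 < F 0 := lt_of_lt_of_le hFs' (hF_anti 0 s' le_rfl hs'0)
  have hub : F s' ^ (-α) ≤ ((t - s') * g t) ^ (-α) :=
    Real.rpow_le_rpow_of_nonpos (mul_pos (by linarith) hgt_pos) hFs'_lb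
      (neg_nonpos.2 hα.le)
  have hlb : (c * E 0) ^ (-α) ≤ F 0 ^ (-α) :=
    Real.rpow_le_rpow_of_nonpos hF0pos (hF_le 0 le_rfl) (neg_nonpos.2 hα.le)
  -- the combined chain
  have chain : (c * E 0) ^ (-α) + α * c ^ (-(α+1)) * s' ≤ ((t - s') * g t) ^ (-α) := by
    linarith
  set R := t - s' with hR_def
  have hRpos : 0 < R := by rw [hR_def]; linarith
  have hTR : T + α * s' = R := by
    rw [hR_def, hs'_def]; field_simp; ring
  -- LHS equals c^(-(α+1)) * R
  have e1 : (c * E 0) ^ (-α) + α * c ^ (-(α+1)) * s' = c ^ (-(α+1)) * R := by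
    have h2 : c ^ (-α) = c ^ (-(α+1)) * c := by
      rw [show -α = -(α+1) + 1 by ring, Real.rpow_add hc, Real.rpow_one]
    have h4 : E 0 ^ (-α) * E 0 ^ α = 1 := by
      rw [← Real.rpow_add he]; norm_num
    have h5 : (c * E 0) ^ (-α) = c ^ (-(α+1)) * T := by
      rw [Real.mul_rpow hc.le he.le, h2]
      calc c ^ (-(α+1)) * c * E 0 ^ (-α)
          = c ^ (-(α+1)) * (T * (E 0 ^ (-α) * E 0 ^ α)) := by rw [hc_def]; ring
        _ = c ^ (-(α+1)) * T := by rw [h4]; ring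
    rw [h5, ← hTR]; ring
  rw [e1] at chain
  -- RHS: ((t-s') * g t)^(-α) = R^(-α) * (E t^(α+1))^(-α)
  have e2 : ((t - s') * g t) ^ (-α) = R ^ (-α) * (E t ^ (α+1)) ^ (-α) := by
    rw [hgt_eq, ← hR_def]
    exact Real.mul_rpow hRpos.le (Real.rpow_nonneg (hE_nonneg t ht0.le) _)
  rw [e2] at chain
  -- deduce (E t ^ α * R) ^ (α+1) ≤ c ^ (α+1)
  have hRα : (0:ℝ) < R ^ α := Real.rpow_pos_of_pos hRpos _
  have haα1 : (0:ℝ) < E t ^ (α+1) := Real.rpow_pos_of_pos hapos _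
  have haZ : (0:ℝ) < (E t ^ (α+1)) ^ α := Real.rpow_pos_of_pos haα1 _
  have hcp : (0:ℝ) < c ^ (α+1) := Real.rpow_pos_of_pos hc _
  have hP : (0:ℝ) < R ^ α * (E t ^ (α+1)) ^ α := mul_pos hRα haZ
  have chain2 : R ^ α * R * (E t ^ (α+1)) ^ α ≤ c ^ (α+1) := by
    have hinv1 : c ^ (-(α+1)) = (c ^ (α+1))⁻¹ := Real.rpow_neg hc.le _
    have hinv2 : R ^ (-α) = (R ^ α)⁻¹ := Real.rpow_neg hRpos.le _
    have hinv3 : (E t ^ (α+1)) ^ (-α) = ((E t ^ (α+1)) ^ α)⁻¹ :=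
      Real.rpow_neg haα1.le _
    rw [hinv1, hinv2, hinv3, ← mul_inv] at chain
    have h := mul_le_mul_of_nonneg_left chain (mul_pos hcp hP).le
    have lhs_eq : c ^ (α+1) * (R ^ α * (E t ^ (α+1)) ^ α) * ((c ^ (α+1))⁻¹ * R)
        = R ^ α * R * (E t ^ (α+1)) ^ α * (c ^ (α+1) * (c ^ (α+1))⁻¹) := by ring
    have rhs_eq : c ^ (α+1) * (R ^ α * (E t ^ (α+1)) ^ α) * (R ^ α * (E t ^ (α+1)) ^ α)⁻¹
        = c ^ (α+1) * ((R ^ α * (E t ^ (α+1)) ^ α) * (R ^ α * (E t ^ (α+1)) ^ α)⁻¹) := by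
      ring
    rw [lhs_eq, rhs_eq, mul_inv_cancel₀ hcp.ne', mul_inv_cancel₀ hP.ne', mul_one, mul_one] at h
    exact h
  have key2 : (E t ^ α * R) ^ (α+1) ≤ c ^ (α+1) := by
    have heq : (E t ^ α * R) ^ (α+1) = R ^ α * R * (E t ^ (α+1)) ^ α := by
      rw [Real.mul_rpow (Real.rpow_nonneg hapos.le _) hRpos.le]
      rw [← Real.rpow_mul hapos.le, ← Real.rpow_mul hapos.le]
      rw [show R ^ (α+1) = R ^ α * R by
        rw [Real.rpow_add hRpos, Real.rpow_one]]
      rw [show α * (α+1) = (α+1) * α by ring]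
      ring
    rw [heq]; exact chain2
  have key3 : E t ^ α * R ≤ c := by
    by_contra hcon
    push_neg at hcon
    have := Real.rpow_lt_rpow hc.le hcon (by linarith : (0:ℝ) < α+1)
    linarith
  -- final algebra
  have hQ'pos : 0 < (T + α * T) / (T + α * t) := div_pos (by nlinarith) (by nlinarith)
  have hTat : (0:ℝ) < T + α * t := by nlinarith
  have hs'mul : s' * (1 + α) = t - T := by
    rw [hs'_def]; exact div_mul_cancel₀ _ h1α.ne'
  have hRval : R * (1 + α) = T + α * t := by
    rw [hR_def]; linear_combination -hs'mul
  have key4' : E t ^ α * (T + α * t) ≤ E 0 ^ α * (T + α * T) := by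
    calc E t ^ α * (T + α * t) = E t ^ α * R * (1 + α) := by
          rw [← hRval]; ring
      _ ≤ c * (1 + α) := mul_le_mul_of_nonneg_right key3 h1α.le
      _ = E 0 ^ α * (T + α * T) := by rw [hc_def]; ring
  have key4 : E t ^ α ≤ E 0 ^ α * ((T + α * T) / (T + α * t)) := by
    rw [show E 0 ^ α * ((T + α * T) / (T + α * t))
        = (E 0 ^ α * (T + α * T)) / (T + α * t) by ring]
    rw [le_div_iff₀ hTat]
    exact key4'
  have hfin : E t ≤ (E 0 ^ α * ((T + α * T) / (T + α * t))) ^ (1/α) := by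
    have h10 : (E t ^ α) ^ (1/α) ≤ (E 0 ^ α * ((T + α * T) / (T + α * t))) ^ (1/α) :=
      Real.rpow_le_rpow (Real.rpow_nonneg hapos.le _) key4 (by positivity)
    rwa [← Real.rpow_mul hapos.le, mul_one_div_cancel hα.ne', Real.rpow_one] at h10
  have hfin2 : (E 0 ^ α * ((T + α * T) / (T + α * t))) ^ (1/α)
      = E 0 * ((T + α * t) / (T + α * T)) ^ (-(1/α)) := by
    rw [Real.mul_rpow (Real.rpow_nonneg he.le _) hQ'pos.le]
    rw [← Real.rpow_mul he.le, mul_one_div_cancel hα.ne', Real.rpow_one]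
    congr 1
    rw [show (T + α * T) / (T + α * t) = ((T + α * t) / (T + α * T))⁻¹ by
      rw [inv_div]]
    rw [Real.inv_rpow hQpos.le, ← Real.rpow_neg hQpos.le]
  rw [← hfin2]
  exact hfin
end

section
/- Let E : [0,∞) → [0,∞) be a non-increasing function, and suppose there exist constants α > 0 and M > 0 such that ∫_t^∞ E(s)^{α+1} ds ≤ M·E(t) for all t ≥ 0. Then E(t) ≤ E(0)·min( (M(α+1)/(M + α·E(0)^α·t))^{1/α}, 1 ) for all t ≥ 0. -/
set_option maxHeartbeats 1000000

open Real MeasureTheory Set Filter Topology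

private lemma aux_e7 (t M P α : ℝ) (hPne : P ≠ 0) (hα1ne : α + 1 ≠ 0)
    (hDne : M + α * P * t ≠ 0) :
    (t - (t - M / P) / (α + 1)) * P * (M * (α + 1) / (M + α * P * t)) = M := by
  field_simp
  ring_nf
  have hD' : M + t * P * α ≠ 0 := by rwa [show M + t * P * α = M + α * P * t by ring]
  field_simp
  ring

theorem stmt_1 (E : ℝ → ℝ) (α M : ℝ)
    (hE_nonneg : ∀ t ≥ (0:ℝ), 0 ≤ E t)
    (hE_anti : AntitoneOn E (Set.Ici 0))
    (hα : 0 < α) (hM : 0 < M)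
    (hInt : ∀ t ≥ (0:ℝ), IntegrableOn (fun s => E s ^ (α + 1)) (Set.Ioi t))
    (hIneq : ∀ t ≥ (0:ℝ), ∫ s in Set.Ioi t, E s ^ (α + 1) ≤ M * E t) :
    ∀ t ≥ (0:ℝ),
      E t ≤ E 0 * min ((M * (α + 1) / (M + α * E 0 ^ α * t)) ^ (1 / α)) 1 := by
  intro t ht
  have hE0 : (0:ℝ) ≤ E 0 := hE_nonneg 0 le_rfl
  have hEt0 : 0 ≤ E t := hE_nonneg t ht
  have hEt_le : E t ≤ E 0 := hE_anti (Set.mem_Ici.mpr le_rfl) (Set.mem_Ici.mpr ht) ht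
  have hα1 : (0:ℝ) < α + 1 := by linarith
  rcases eq_or_lt_of_le hE0 with h0 | hE0pos
  · -- E 0 = 0 : everything vanishes
    have h1 : E t = 0 := le_antisymm (by rw [← h0] at hEt_le; exact hEt_le) hEt0
    rw [h1]
    have hPnn : 0 ≤ E 0 ^ α := Real.rpow_nonneg hE0 α
    have hden : 0 ≤ M + α * E 0 ^ α * t := by nlinarith [mul_nonneg (mul_nonneg hα.le hPnn) ht]
    have hbase : 0 ≤ M * (α + 1) / (M + α * E 0 ^ α * t) := div_nonneg (by nlinarith) hden
    exact mul_nonneg hE0 (le_min (Real.rpow_nonneg hbase _) zero_le_one)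
  -- Main case : E 0 > 0
  set G : ℝ → ℝ := fun s => E s ^ (α + 1) with hGdef
  have hG_nonneg : ∀ s, 0 ≤ s → 0 ≤ G s := fun s hs => Real.rpow_nonneg (hE_nonneg s hs) _
  have hG_anti : ∀ a b : ℝ, 0 ≤ a → a ≤ b → G b ≤ G a := fun a b ha hab =>
    Real.rpow_le_rpow (hE_nonneg b (ha.trans hab))
      (hE_anti (Set.mem_Ici.mpr ha) (Set.mem_Ici.mpr (ha.trans hab)) hab) hα1.le
  set H : ℝ → ℝ := fun r => ∫ s in Set.Ioi r, G s with hHdef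
  have hH_nonneg : ∀ r, 0 ≤ r → 0 ≤ H r := by
    intro r hr
    simp only [hHdef]
    exact setIntegral_nonneg measurableSet_Ioi (fun s hs => hG_nonneg s (hr.trans (le_of_lt hs)))
  have hH_le : ∀ r, 0 ≤ r → H r ≤ M * E r := by
    intro r hr
    simp only [hHdef]
    exact hIneq r hr
  have hsplit : ∀ a b : ℝ, 0 ≤ a → a ≤ b → H a = (∫ s in Set.Ioc a b, G s) + H b := by
    intro a b ha hab
    have h1 : Set.Ioc a b ∪ Set.Ioi b = Set.Ioi a := Set.Ioc_union_Ioi_eq_Ioi hab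
    have h2 : IntegrableOn G (Set.Ioc a b) := (hInt a ha).mono_set Set.Ioc_subset_Ioi_self
    have h3 : IntegrableOn G (Set.Ioi b) := hInt b (ha.trans hab)
    simp only [hHdef]
    rw [← h1]
    exact setIntegral_union (Set.Ioc_disjoint_Ioi le_rfl) measurableSet_Ioi h2 h3
  have hIoc_nonneg : ∀ a b : ℝ, 0 ≤ a → 0 ≤ ∫ s in Set.Ioc a b, G s := fun a b ha =>
    setIntegral_nonneg measurableSet_Ioc (fun s hs => hG_nonneg s (ha.trans hs.1.le))
  have hlb : ∀ a b : ℝ, 0 ≤ a → a ≤ b → (b - a) * G b ≤ ∫ s in Set.Ioc a b, G s := by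
    intro a b ha hab
    have h2 : IntegrableOn G (Set.Ioc a b) := (hInt a ha).mono_set Set.Ioc_subset_Ioi_self
    have h3 : (∫ _s in Set.Ioc a b, G b) ≤ ∫ s in Set.Ioc a b, G s :=
      setIntegral_mono_on (integrableOn_const measure_Ioc_lt_top.ne) h2
        measurableSet_Ioc (fun x hx => hG_anti x b (ha.trans hx.1.le) hx.2)
    have h4 : (∫ _s in Set.Ioc a b, G b) = (b - a) * G b := by
      simp [Real.volume_Ioc, ENNReal.toReal_ofReal (sub_nonneg.mpr hab)]; exact Or.inl hab
    linarith
  have hH_cont : ∀ b : ℝ, 0 ≤ b → ContinuousOn H (Set.Icc 0 b) := by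
    intro b hb
    have hint : IntegrableOn G (Set.Icc 0 b) := by
      rw [integrableOn_Icc_iff_integrableOn_Ioc]
      exact (hInt 0 le_rfl).mono_set Set.Ioc_subset_Ioi_self
    have h1 : ContinuousOn (fun x => ∫ s in Set.Ioc 0 x, G s) (Set.Icc 0 b) :=
      intervalIntegral.continuousOn_primitive hint
    exact (continuousOn_const.sub h1).congr fun x hx => by
      have h2 := hsplit 0 x le_rfl hx.1
      show H x = H 0 - ∫ s in Set.Ioc 0 x, G s
      linarith
  have hG_ge : ∀ s, 0 ≤ s → (H s / M) ^ (α + 1) ≤ G s := by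
    intro s hs
    have h1 : H s / M ≤ E s := (div_le_iff₀' hM).mpr (hH_le s hs)
    exact Real.rpow_le_rpow (div_nonneg (hH_nonneg s hs) hM.le) h1 hα1.le
  set c : ℝ := M * E 0 with hcdef
  have hc : 0 < c := mul_pos hM hE0pos
  have hMα : (0:ℝ) < M ^ (α + 1) := Real.rpow_pos_of_pos hM _
  set k : ℝ := α / M ^ (α + 1) with hkdef
  have hk : 0 < k := div_pos hα hMα
  -- Gronwall-type key estimate
  have key : ∀ b : ℝ, 0 ≤ b → H b ≤ (c ^ (-α) + k * b) ^ (-(1 / α)) := by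
    intro b hb
    have hslope : ∀ x ∈ Set.Ico (0:ℝ) b, ∀ r : ℝ,
        (fun y => -((H y / M) ^ (α + 1))) x < r → ∃ᶠ z in 𝓝[>] x, slope H x z < r := by
      intro x hx r hr
      have hHx : Tendsto H (𝓝[>] x) (𝓝 (H x)) := by
        have h1 : ContinuousWithinAt H (Set.Icc 0 b) x :=
          (hH_cont b (hx.1.trans hx.2.le)).continuousWithinAt (Set.mem_Icc.mpr ⟨hx.1, hx.2.le⟩)
        have h2 : 𝓝[>] x = 𝓝[Set.Ioc x b] x := (nhdsWithin_Ioc_eq_nhdsGT hx.2).symm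
        rw [h2]
        exact h1.mono_left (nhdsWithin_mono x (fun z hz => ⟨hx.1.trans hz.1.le, hz.2⟩))
      have hcont : Tendsto (fun z => -((H z / M) ^ (α + 1))) (𝓝[>] x)
          (𝓝 (-((H x / M) ^ (α + 1)))) := by
        have h3 : ContinuousAt (fun y : ℝ => -((y / M) ^ (α + 1))) (H x) :=
          (((continuousAt_id (x := H x)).div_const M).rpow_const (Or.inr hα1.le)).neg
        exact h3.tendsto.comp hHx
      have hev1 : ∀ᶠ z in 𝓝[>] x, -((H z / M) ^ (α + 1)) < r := hcont.eventually_lt_const hr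
      have hev2 : ∀ᶠ z in 𝓝[>] x, slope H x z ≤ -((H z / M) ^ (α + 1)) := by
        filter_upwards [self_mem_nhdsWithin] with z hz
        have hxz : x < z := hz
        have h5 : H x = (∫ s in Set.Ioc x z, G s) + H z := hsplit x z hx.1 hxz.le
        have h6 : (z - x) * G z ≤ ∫ s in Set.Ioc x z, G s := hlb x z hx.1 hxz.le
        have h8 : (H z / M) ^ (α + 1) ≤ G z := hG_ge z (hx.1.trans hxz.le)
        rw [slope_def_field, div_le_iff₀ (sub_pos.mpr hxz)]
        nlinarith
      exact ((hev2.and hev1).mono fun z hz => lt_of_le_of_lt hz.1 hz.2).frequently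
    have hεbound : ∀ ε : ℝ, ε ∈ Set.Ioo (0:ℝ) 1 →
        H b ≤ (c ^ (-α) + (1 - ε) * k * b) ^ (-(1 / α)) := by
      intro ε hε
      set L : ℝ → ℝ := fun x => c ^ (-α) + (1 - ε) * k * x with hLdef
      have hLpos : ∀ x : ℝ, 0 ≤ x → 0 < L x := by
        intro x hx
        have h1 : 0 < c ^ (-α) := Real.rpow_pos_of_pos hc _
        have h2 : 0 ≤ (1 - ε) * k * x :=
          mul_nonneg (mul_nonneg (by linarith [hε.2]) hk.le) hx
        simp only [hLdef]
        linarith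
      set Bf : ℝ → ℝ := fun x => L x ^ (-(1 / α)) with hBdef
      have hBpos : ∀ x : ℝ, 0 ≤ x → 0 < Bf x := fun x hx => Real.rpow_pos_of_pos (hLpos x hx) _
      have hLderiv : ∀ x : ℝ, HasDerivAt L ((1 - ε) * k) x := by
        intro x
        simpa [hLdef] using ((hasDerivAt_id x).const_mul ((1 - ε) * k)).const_add (c ^ (-α))
      have hBderiv : ∀ x : ℝ, 0 ≤ x →
          HasDerivAt Bf (-(1 - ε) * ((Bf x / M) ^ (α + 1))) x := by
        intro x hx
        have hLx := hLpos x hx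
        have h1 : HasDerivAt (fun y : ℝ => y ^ (-(1 / α)))
            (-(1 / α) * L x ^ (-(1 / α) - 1)) (L x) :=
          Real.hasDerivAt_rpow_const (Or.inl (ne_of_gt hLx))
        have h2 := h1.comp x (hLderiv x)
        have e1 : (Bf x / M) ^ (α + 1) = L x ^ (-(1 / α) - 1) / M ^ (α + 1) := by
          rw [Real.div_rpow (hBpos x hx).le hM.le]
          congr 1
          simp only [hBdef]
          rw [← Real.rpow_mul hLx.le]
          congr 1
          field_simp
          ring
        have e2 : -(1 - ε) * ((Bf x / M) ^ (α + 1)) =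
            -(1 / α) * L x ^ (-(1 / α) - 1) * ((1 - ε) * k) := by
          rw [e1, hkdef]
          field_simp
        rw [e2]
        exact h2
      have hBcont : ContinuousOn Bf (Set.Icc 0 b) := fun x hx =>
        ((hBderiv x hx.1).continuousAt).continuousWithinAt
      have hB' : ∀ x ∈ Set.Ico (0:ℝ) b, HasDerivWithinAt Bf
          ((fun x => -(1 - ε) * ((Bf x / M) ^ (α + 1))) x) (Set.Ici x) x := fun x hx =>
        (hBderiv x hx.1).hasDerivWithinAt
      have ha0 : H 0 ≤ Bf 0 := by
        have e3 : Bf 0 = c := by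
          simp only [hBdef, hLdef, mul_zero, add_zero]
          rw [← Real.rpow_mul hc.le]
          have h9 : -α * -(1 / α) = 1 := by field_simp
          rw [h9, Real.rpow_one]
        rw [e3, hcdef]
        exact hH_le 0 le_rfl
      have hbound : ∀ x ∈ Set.Ico (0:ℝ) b, H x = Bf x →
          (fun y => -((H y / M) ^ (α + 1))) x < -(1 - ε) * ((Bf x / M) ^ (α + 1)) := by
        intro x hx heq
        simp only [heq]
        have h1 : 0 < (Bf x / M) ^ (α + 1) :=
          Real.rpow_pos_of_pos (div_pos (hBpos x hx.1) hM) _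
        nlinarith [hε.1]
      have := image_le_of_liminf_slope_right_lt_deriv_boundary' (hH_cont b hb) hslope ha0
        hBcont hB' hbound (Set.mem_Icc.mpr ⟨hb, le_rfl⟩)
      simpa only [hBdef, hLdef] using this
    have hin0 : (0:ℝ) < c ^ (-α) + (1 - 0) * k * b := by
      have h1 : 0 < c ^ (-α) := Real.rpow_pos_of_pos hc _
      have h2 : 0 ≤ (1 - (0:ℝ)) * k * b := by positivity
      linarith
    have htend : Tendsto (fun ε : ℝ => (c ^ (-α) + (1 - ε) * k * b) ^ (-(1 / α))) (𝓝[>] 0)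
        (𝓝 ((c ^ (-α) + (1 - 0) * k * b) ^ (-(1 / α)))) := by
      have h1 : ContinuousAt (fun ε : ℝ => (c ^ (-α) + (1 - ε) * k * b) ^ (-(1 / α))) 0 := by
        have h2 : ContinuousAt (fun ε : ℝ => c ^ (-α) + (1 - ε) * k * b) 0 := by fun_prop
        exact h2.rpow_const (Or.inl hin0.ne')
      exact h1.tendsto.mono_left nhdsWithin_le_nhds
    have hev : ∀ᶠ ε in 𝓝[>] (0:ℝ), H b ≤ (c ^ (-α) + (1 - ε) * k * b) ^ (-(1 / α)) := by
      filter_upwards [Ioo_mem_nhdsGT_of_mem (Set.mem_Ico.mpr ⟨le_rfl, one_pos⟩)] with ε hε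
      exact hεbound ε hε
    have h10 := ge_of_tendsto htend hev
    simpa using h10
  -- Final algebra
  set P : ℝ := E 0 ^ α with hPdef
  have hPpos : 0 < P := Real.rpow_pos_of_pos hE0pos α
  have hD : 0 < M + α * P * t := by nlinarith [mul_nonneg (mul_nonneg hα.le hPpos.le) ht]
  set Xa : ℝ := M * (α + 1) / (M + α * P * t) with hXadef
  have hXapos : 0 < Xa := div_pos (by nlinarith) hD
  set X : ℝ := Xa ^ (1 / α) with hXdef
  have hXpos : 0 < X := Real.rpow_pos_of_pos hXapos _
  rw [mul_min_of_nonneg _ _ hE0, mul_one]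
  refine le_min ?_ hEt_le
  rcases le_or_gt (P * t) M with hsmall | hbig
  · have h1 : 1 ≤ Xa := by
      rw [hXadef, le_div_iff₀ hD]
      nlinarith
    have h2 : 1 ≤ X := by
      calc (1:ℝ) = 1 ^ (1 / α) := (Real.one_rpow _).symm
        _ ≤ Xa ^ (1 / α) := Real.rpow_le_rpow zero_le_one h1 (by positivity)
    calc E t ≤ E 0 := hEt_le
      _ ≤ E 0 * X := le_mul_of_one_le_right hE0 h2
  · have htpos : 0 < t := by nlinarith
    set a : ℝ := (t - M / P) / (α + 1) with hadef
    have hMP : M / P < t := (div_lt_iff₀ hPpos).mpr (by nlinarith)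
    have ha0 : 0 ≤ a := div_nonneg (by linarith) hα1.le
    have hat : a < t := by
      rw [hadef, div_lt_iff₀ hα1]
      have h1 : 0 < M / P := div_pos hM hPpos
      nlinarith
    have hstep : (t - a) * G t ≤ H a := by
      have h1 := hsplit a t ha0 hat.le
      have h2 := hlb a t ha0 hat.le
      have h3 := hH_nonneg t ht
      linarith
    have hkey := key a ha0
    have hQ : (0:ℝ) < M ^ α := Real.rpow_pos_of_pos hM α
    have hMα1 : M ^ (α + 1) = M ^ α * M := by rw [Real.rpow_add hM, Real.rpow_one]
    have hcα : c ^ (-α) = (M ^ α)⁻¹ * P⁻¹ := by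
      rw [hcdef, Real.mul_rpow hM.le hE0, Real.rpow_neg hM.le, Real.rpow_neg hE0, ← hPdef]
    have hQne : (M:ℝ) ^ α ≠ 0 := hQ.ne'
    have hPne : P ≠ 0 := hPpos.ne'
    have hMne : M ≠ 0 := hM.ne'
    have hα1ne : α + 1 ≠ 0 := hα1.ne'
    have hDne : M + α * P * t ≠ 0 := hD.ne'
    have hinner : c ^ (-α) + k * a = c ^ (-α) * Xa⁻¹ := by
      rw [hcα, hkdef, hMα1, hadef, hXadef]
      field_simp
      ring
    have hEA : (c ^ (-α) + k * a) ^ (-(1 / α)) = c * X := by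
      rw [hinner, Real.mul_rpow (Real.rpow_nonneg hc.le _) (inv_nonneg.mpr hXapos.le)]
      have e2 : (c ^ (-α)) ^ (-(1 / α)) = c := by
        rw [← Real.rpow_mul hc.le]
        have h9 : -α * -(1 / α) = 1 := by field_simp
        rw [h9, Real.rpow_one]
      have e3 : (Xa⁻¹) ^ (-(1 / α)) = X := by
        rw [← Real.rpow_neg_one Xa, ← Real.rpow_mul hXapos.le]
        have h9 : (-1 : ℝ) * -(1 / α) = 1 / α := by ring
        rw [h9, hXdef]
      rw [e2, e3]
    have hEB : (t - a) * (E 0 * X) ^ (α + 1) = c * X := by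
      have e5 : E 0 ^ (α + 1) = P * E 0 := by
        rw [Real.rpow_add hE0pos, Real.rpow_one, ← hPdef]
      have e6 : X ^ (α + 1) = Xa * X := by
        rw [hXdef, ← Real.rpow_mul hXapos.le]
        have hinv : 1 / α * α = 1 := by
          rw [one_div, inv_mul_cancel₀ hα.ne']
        have h9 : 1 / α * (α + 1) = 1 + 1 / α := by linear_combination hinv
        rw [h9, Real.rpow_add hXapos, Real.rpow_one]
      have e4 : (E 0 * X) ^ (α + 1) = E 0 * P * (Xa * X) := by
        rw [Real.mul_rpow hE0 hXpos.le, e5, e6]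
        ring
      have e7 : (t - a) * P * Xa = M := by
        rw [hadef, hXadef]
        exact aux_e7 t M P α hPne hα1ne hDne
      rw [e4, hcdef]
      linear_combination (E 0 * X) * e7
    have h9 : (t - a) * G t ≤ (t - a) * (E 0 * X) ^ (α + 1) := by
      rw [hEB]
      calc (t - a) * G t ≤ H a := hstep
        _ ≤ (c ^ (-α) + k * a) ^ (-(1 / α)) := hkey
        _ = c * X := hEA
    have h10 : G t ≤ (E 0 * X) ^ (α + 1) :=
      le_of_mul_le_mul_left h9 (by linarith)
    by_contra hcon
    push_neg at hcon
    have h11 := Real.rpow_lt_rpow (by positivity) hcon hα1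
    simp only [hGdef] at h10
    linarith
end

section
/- Let E : [0,∞) → [0,∞) be a non-increasing function and T > 0 a constant such that ∫_t^∞ E(s) ds ≤ T·E(t) for all t ≥ 0. Then E(t) ≤ E(0)·e^{1 - t/T} for all t ≥ T. -/
open Real MeasureTheory Set Filter Topology

theorem stmt_3 (E : ℝ → ℝ) (T : ℝ)
    (hE_nonneg : ∀ t ≥ (0:ℝ), 0 ≤ E t)
    (hE_anti : AntitoneOn E (Set.Ici 0))
    (hT : 0 < T)
    (hInt : ∀ t ≥ (0:ℝ), IntegrableOn E (Set.Ioi t))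
    (hIneq : ∀ t ≥ (0:ℝ), ∫ s in Set.Ioi t, E s ≤ T * E t) :
    ∀ t ≥ T, E t ≤ E 0 * Real.exp (1 - t / T) := by
  set F : ℝ → ℝ := fun t => ∫ s in Set.Ioi t, E s with hF
  have hFnonneg : ∀ t ≥ (0:ℝ), 0 ≤ F t := by
    intro t ht
    apply setIntegral_nonneg measurableSet_Ioi
    intro x hx
    exact hE_nonneg x (le_of_lt (lt_of_le_of_lt ht hx))
  -- key lower bound: for t ≥ 0, s > 0, s * E (t+s) + F (t+s) ≤ F t
  have hlb : ∀ t ≥ (0:ℝ), ∀ s > (0:ℝ), s * E (t + s) + F (t + s) ≤ F t := by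
    intro t ht s hs
    have hts : (0:ℝ) ≤ t + s := by linarith
    have hsplit : Set.Ioi t = Set.Ioc t (t + s) ∪ Set.Ioi (t + s) :=
      (Set.Ioc_union_Ioi_eq_Ioi (by linarith)).symm
    have hint1 : IntegrableOn E (Set.Ioc t (t + s)) :=
      (hInt t ht).mono_set (Set.Ioc_subset_Ioi_self)
    have hint2 : IntegrableOn E (Set.Ioi (t + s)) := hInt (t + s) hts
    have hFeq : F t = (∫ x in Set.Ioc t (t + s), E x) + F (t + s) := by
      rw [hF]
      simp only
      rw [hsplit, setIntegral_union (Set.Ioc_disjoint_Ioi le_rfl) measurableSet_Ioi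
        hint1 hint2]
    have hconst : s * E (t + s) ≤ ∫ x in Set.Ioc t (t + s), E x := by
      have : ∫ _x in Set.Ioc t (t + s), E (t + s) = s * E (t + s) := by
        rw [setIntegral_const, measureReal_def, Real.volume_Ioc,
          ENNReal.toReal_ofReal (show (0:ℝ) ≤ t + s - t by linarith), smul_eq_mul]
        ring
      rw [← this]
      apply setIntegral_mono_on (integrableOn_const (by
          rw [Real.volume_Ioc]; exact ENNReal.ofReal_ne_top))
        hint1 measurableSet_Ioc
      intro x hx
      exact hE_anti (Set.mem_Ici.2 (le_of_lt (lt_of_le_of_lt ht hx.1)))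
        (Set.mem_Ici.2 hts) hx.2
    linarith
  -- step: (1 + s/T) * F (t+s) ≤ F t
  have hstep : ∀ t ≥ (0:ℝ), ∀ s > (0:ℝ), (1 + s / T) * F (t + s) ≤ F t := by
    intro t ht s hs
    have h1 := hlb t ht s hs
    have h2 : F (t + s) ≤ T * E (t + s) := hIneq (t + s) (by linarith)
    have h3 : s / T * F (t + s) ≤ s * E (t + s) := by
      rw [div_mul_eq_mul_div, div_le_iff₀ hT]
      calc s * F (t + s) ≤ s * (T * E (t + s)) := by
            exact mul_le_mul_of_nonneg_left h2 hs.le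
        _ = s * E (t + s) * T := by ring
    linarith
  -- iterate
  have hiter : ∀ s > (0:ℝ), ∀ k : ℕ, (1 + s / T) ^ k * F (k * s) ≤ F 0 := by
    intro s hs k
    induction k with
    | zero => simp
    | succ n ih =>
      have hns : (0:ℝ) ≤ (n : ℝ) * s := by positivity
      have h := hstep ((n : ℝ) * s) hns s hs
      have hpow : (0:ℝ) ≤ (1 + s / T) ^ n := by positivity
      have : ((n : ℝ) + 1) * s = (n : ℝ) * s + s := by ring
      rw [pow_succ]
      push_cast
      rw [this]
      calc (1 + s / T) ^ n * (1 + s / T) * F ((n : ℝ) * s + s)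
          = (1 + s / T) ^ n * ((1 + s / T) * F ((n : ℝ) * s + s)) := by ring
        _ ≤ (1 + s / T) ^ n * F ((n : ℝ) * s) := mul_le_mul_of_nonneg_left h hpow
        _ ≤ F 0 := ih
  -- decay of F
  have hFdecay : ∀ u ≥ (0:ℝ), F u * Real.exp (u / T) ≤ F 0 := by
    intro u hu
    rcases eq_or_lt_of_le hu with h | h
    · simp [← h]
    · have hbound : ∀ n : ℕ, 1 ≤ n → F u * (1 + (u / T) / n) ^ n ≤ F 0 := by
        intro n hn
        have hnpos : (0:ℝ) < n := by exact_mod_cast hn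
        have hs : 0 < u / n := div_pos h hnpos
        have h := hiter (u / n) hs n
        have : (n : ℝ) * (u / n) = u := by field_simp
        rw [this] at h
        have : (1 + (u / T) / n) = (1 + (u / n) / T) := by ring
        rw [this]
        linarith [h]
      have hlim : Tendsto (fun n : ℕ => F u * (1 + (u / T) / n) ^ n) atTop
          (𝓝 (F u * Real.exp (u / T))) :=
        (Real.tendsto_one_add_div_pow_exp (u / T)).const_mul _
      exact le_of_tendsto hlim (eventually_atTop.2 ⟨1, fun n hn => hbound n hn⟩)
  -- conclusion
  intro t ht
  have htpos : (0:ℝ) ≤ t := le_trans hT.le ht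
  have hu : (0:ℝ) ≤ t - T := by linarith
  have h1 : T * E t + F t ≤ F (t - T) := by
    have := hlb (t - T) hu T hT
    simpa using this
  have h2 : F (t - T) * Real.exp ((t - T) / T) ≤ F 0 := hFdecay (t - T) hu
  have h3 : F 0 ≤ T * E 0 := hIneq 0 le_rfl
  have hFt : 0 ≤ F t := hFnonneg t htpos
  have hexp : (0:ℝ) < Real.exp ((t - T) / T) := Real.exp_pos _
  have h4 : T * E t ≤ F (t - T) := by linarith
  have h5 : T * E t * Real.exp ((t - T) / T) ≤ T * E 0 := by
    calc T * E t * Real.exp ((t - T) / T)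
        ≤ F (t - T) * Real.exp ((t - T) / T) := by
          exact mul_le_mul_of_nonneg_right h4 hexp.le
      _ ≤ F 0 := h2
      _ ≤ T * E 0 := h3
  have hET : E t * Real.exp ((t - T) / T) ≤ E 0 := by
    have := (mul_le_mul_iff_right₀ hT).mp (by linarith [h5] : T * (E t * Real.exp ((t - T) / T)) ≤ T * E 0)
    exact this
  have hkey : Real.exp (1 - t / T) = (Real.exp ((t - T) / T))⁻¹ := by
    rw [← Real.exp_neg]
    congr 1
    field_simp
    ring
  rw [hkey, ← div_eq_mul_inv, le_div_iff₀ hexp]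
  exact hET
end

section
/- Let H be a strictly convex, strictly increasing C¹ function on [0, r₀²] with H(0) = H'(0) = 0 and H(x) > 0 for x > 0. Define Ĥ on ℝ by Ĥ(x) = H(x) for x ∈ [0, r₀²] and Ĥ(x) = +∞ otherwise, let Ĥ* be its convex conjugate, and define L(y) = Ĥ*(y)/y for y > 0 and L(0) = 0. Then L : [0,∞) → [0, r₀²) is continuous, strictly increasing, and bijective onto [0, r₀²), and moreover 0 < L(H'(r₀²)) < r₀². -/
open Real Set Filter Topology

theorem stmt_9 (r₀ : ℝ) (hr₀ : r₀ ∈ Set.Ioc (0:ℝ) 1)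
    (H H' : ℝ → ℝ)
    (hconv : StrictConvexOn ℝ (Set.Icc 0 (r₀ ^ 2)) H)
    (hC1 : ∀ x ∈ Set.Icc (0:ℝ) (r₀ ^ 2),
      HasDerivWithinAt H (H' x) (Set.Icc 0 (r₀ ^ 2)) x)
    (hH'cont : ContinuousOn H' (Set.Icc 0 (r₀ ^ 2)))
    (hH0 : H 0 = 0) (hH'0 : H' 0 = 0)
    (hHpos : ∀ x ∈ Set.Ioc (0:ℝ) (r₀ ^ 2), 0 < H x)
    (hHmono : StrictMonoOn H (Set.Icc 0 (r₀ ^ 2)))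
    (L : ℝ → ℝ)
    (hL : ∀ y > (0:ℝ),
      L y = sSup ((fun x => x * y - H x) '' Set.Icc (0:ℝ) (r₀ ^ 2)) / y)
    (hL0 : L 0 = 0) :
    ContinuousOn L (Set.Ici 0) ∧
    StrictMonoOn L (Set.Ici 0) ∧
    Set.BijOn L (Set.Ici 0) (Set.Ico 0 (r₀ ^ 2)) ∧
    0 < L (H' (r₀ ^ 2)) ∧ L (H' (r₀ ^ 2)) < r₀ ^ 2 := by
  obtain ⟨hr0, -⟩ := hr₀
  set c := r₀ ^ 2 with hcdef
  have hc : 0 < c := pow_pos hr0 2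
  set s : Set ℝ := Set.Icc 0 c with hsdef
  have h0s : (0:ℝ) ∈ s := ⟨le_refl 0, hc.le⟩
  have hcs : c ∈ s := ⟨hc.le, le_refl c⟩
  have hHcont : ContinuousOn H s := fun x hx => (hC1 x hx).continuousWithinAt
  have hHnn : ∀ x ∈ s, 0 ≤ H x := by
    intro x hx
    rcases eq_or_lt_of_le hx.1 with h | h
    · rw [← h, hH0]
    · exact (hHpos x ⟨h, hx.2⟩).le
  set g : ℝ → ℝ := fun y => sSup ((fun x => x * y - H x) '' s) with hgdef
  -- maximizer exists
  have hmax : ∀ y : ℝ, ∃ x ∈ s, g y = x * y - H x ∧ ∀ z ∈ s, z * y - H z ≤ g y := by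
    intro y
    have hconts : ContinuousOn (fun x => x * y - H x) s :=
      (continuousOn_id.mul continuousOn_const).sub hHcont
    obtain ⟨x, hxs, hxmax⟩ := isCompact_Icc.exists_isMaxOn (nonempty_Icc.mpr hc.le) hconts
    have hgr : IsGreatest ((fun x => x * y - H x) '' s) (x * y - H x) :=
      ⟨Set.mem_image_of_mem _ hxs, by
        rintro w ⟨z, hz, rfl⟩
        exact (isMaxOn_iff.mp hxmax) z hz⟩
    refine ⟨x, hxs, hgr.csSup_eq, ?_⟩
    intro z hz
    rw [show g y = x * y - H x from hgr.csSup_eq]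
    exact (isMaxOn_iff.mp hxmax) z hz
  have hgub : ∀ y : ℝ, ∀ x ∈ s, x * y - H x ≤ g y := by
    intro y x hx
    obtain ⟨x', -, -, hub⟩ := hmax y
    exact hub x hx
  -- slope at 0 tends to 0
  have hslope0 : Tendsto (fun x => H x / x) (𝓝[s \ {0}] 0) (𝓝 0) := by
    have h1 := hasDerivWithinAt_iff_tendsto_slope.mp (hC1 0 h0s)
    rw [hH'0] at h1
    have h2 : slope H 0 = fun x => H x / x := by
      funext x; rw [slope_def_field, hH0, sub_zero, sub_zero]
    rwa [h2] at h1
  have hne0 : (𝓝[s \ {0}] (0:ℝ)).NeBot := by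
    rw [hsdef, Set.Icc_diff_left]
    apply mem_closure_iff_nhdsWithin_neBot.mp
    rw [closure_Ioc hc.ne]
    exact ⟨le_refl 0, hc.le⟩
  have hgpos : ∀ y > (0:ℝ), 0 < g y := by
    intro y hy
    have hev : ∀ᶠ x in 𝓝[s \ {0}] 0, H x / x < y := hslope0.eventually_lt_const hy
    obtain ⟨x, hx1, hx2⟩ := (hev.and self_mem_nhdsWithin).exists
    have hx0 : 0 < x := lt_of_le_of_ne hx2.1.1 (Ne.symm hx2.2)
    have hxy : H x < x * y := by
      rw [div_lt_iff₀ hx0] at hx1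
      have := mul_comm x y
      linarith
    have := hgub y x hx2.1
    linarith
  -- key: maximizer properties for y > 0
  have hkey : ∀ y > (0:ℝ), ∃ x ∈ s, 0 < x ∧ g y = x * y - H x ∧
      0 < L y ∧ L y ≤ x ∧ L y < c := by
    intro y hy
    obtain ⟨x, hxs, hgx, -⟩ := hmax y
    have hx0 : 0 < x := by
      rcases eq_or_lt_of_le hxs.1 with h | h
      · exfalso
        have h2 := hgpos y hy
        rw [hgx, ← h, hH0, zero_mul, sub_zero] at h2
        exact lt_irrefl 0 h2
      · exact h
    have hHx : 0 < H x := hHpos x ⟨hx0, hxs.2⟩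
    have hLy : L y = g y / y := hL y hy
    have hLpos : 0 < L y := by rw [hLy]; exact div_pos (hgpos y hy) hy
    have hLle : L y ≤ x := by
      rw [hLy, div_le_iff₀ hy, hgx]
      have := mul_comm x y
      linarith
    have hLlt : L y < c := by
      rw [hLy, div_lt_iff₀ hy]
      have h1 : x * y ≤ c * y := mul_le_mul_of_nonneg_right hxs.2 hy.le
      have := mul_comm c y
      rw [hgx]; linarith
    exact ⟨x, hxs, hx0, hgx, hLpos, hLle, hLlt⟩
  -- strict monotonicity
  have hmono : StrictMonoOn L (Set.Ici 0) := by
    intro a ha b hb hab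
    rcases eq_or_lt_of_le (mem_Ici.mp ha) with h | h
    · have hb0 : 0 < b := by rw [← h] at hab; exact hab
      obtain ⟨x, -, -, -, hLpos, -, -⟩ := hkey b hb0
      rw [← h, hL0]; exact hLpos
    · obtain ⟨x, hxs, hx0, hga, hLapos, -, -⟩ := hkey a h
      have hb0 : 0 < b := h.trans hab
      have hHx : 0 < H x := hHpos x ⟨hx0, hxs.2⟩
      have hLa' : L a = g a / a := hL a h
      have hLb' : L b = g b / b := hL b hb0
      have hLa : L a = x - H x / a := by
        rw [hLa', hga, sub_div, mul_div_cancel_right₀ x h.ne']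
      have hLb : x - H x / b ≤ L b := by
        rw [hLb', le_div_iff₀ hb0]
        have h1 := hgub b x hxs
        have h2 : (x - H x / b) * b = x * b - H x := by
          field_simp
        linarith
      have hdiv : H x / b < H x / a := div_lt_div_of_pos_left hHx h hab
      linarith
  -- Lipschitz bound for g
  have hglip : ∀ a b : ℝ, g a - g b ≤ c * |a - b| := by
    intro a b
    obtain ⟨x, hxs, hga, -⟩ := hmax a
    have h1 : x * b - H x ≤ g b := hgub b x hxs
    have h2 : x * (a - b) ≤ c * |a - b| :=
      calc x * (a - b) ≤ x * |a - b| := mul_le_mul_of_nonneg_left (le_abs_self _) hxs.1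
        _ ≤ c * |a - b| := mul_le_mul_of_nonneg_right hxs.2 (abs_nonneg _)
    have h3 : x * a - x * b = x * (a - b) := by ring
    linarith
  have hgcont : Continuous g := by
    have hlg : LipschitzWith (Real.toNNReal c) g := by
      apply LipschitzWith.of_dist_le_mul
      intro a b
      rw [Real.dist_eq, Real.dist_eq, Real.coe_toNNReal c hc.le]
      rw [abs_sub_le_iff]
      refine ⟨hglip a b, ?_⟩
      have := hglip b a
      rwa [abs_sub_comm] at this
    exact hlg.continuous
  -- continuity of L on Ici 0
  have hLcont : ContinuousOn L (Set.Ici 0) := by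
    intro y hy
    rcases eq_or_lt_of_le (mem_Ici.mp hy) with h | h
    · subst h
      have htend : Tendsto L (𝓝[Set.Ici 0] 0) (𝓝 0) := by
        rw [Metric.tendsto_nhdsWithin_nhds]
        intro ε hε
        set e := min (ε/2) (c/2) with hedef
        have he0 : 0 < e := lt_min (half_pos hε) (half_pos hc)
        have hec : e ≤ c := (min_le_right _ _).trans (by linarith)
        have hHe : 0 < H e := hHpos e ⟨he0, hec⟩
        refine ⟨H e / c, div_pos hHe hc, ?_⟩
        intro x hx hdist
        rw [Real.dist_eq, sub_zero] at hdist
        rw [Real.dist_eq, sub_zero]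
        rcases eq_or_lt_of_le (mem_Ici.mp hx) with h0 | h0
        · rw [← h0, hL0, abs_zero]; exact hε
        · obtain ⟨z, hzs, hz0, hgz, hLpos, hLlez, -⟩ := hkey x h0
          have hzlt : z < e := by
            by_contra hzge
            push_neg at hzge
            have hHz : H e ≤ H z := by
              rcases eq_or_lt_of_le hzge with h1 | h1
              · rw [h1]
              · exact (hHmono ⟨he0.le, hec⟩ hzs h1).le
            have hgpos' : 0 < g x := hgpos x h0
            rw [hgz] at hgpos'
            have hxlt : H e / c < x := by
              rw [div_lt_iff₀ hc]
              have h1 : z * x ≤ c * x := mul_le_mul_of_nonneg_right hzs.2 h0.le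
              have := mul_comm x c
              linarith
            rw [abs_of_pos h0] at hdist
            linarith
          rw [abs_of_pos hLpos]
          have := min_le_left (ε/2) (c/2)
          calc L x ≤ z := hLlez
            _ < e := hzlt
            _ ≤ ε/2 := min_le_left _ _
            _ < ε := by linarith
      show ContinuousWithinAt L (Set.Ici 0) 0
      unfold ContinuousWithinAt
      rwa [hL0]
    · have hcw : ContinuousWithinAt (fun t => g t / t) (Set.Ici 0) y :=
        ((hgcont.continuousAt).div continuousAt_id h.ne').continuousWithinAt
      refine hcw.congr_of_eventuallyEq ?_ (hL y h)
      have hmem : Set.Ioi (0:ℝ) ∈ 𝓝[Set.Ici 0] y :=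
        mem_nhdsWithin_of_mem_nhds (Ioi_mem_nhds h)
      filter_upwards [hmem] with t ht using hL t ht
  -- derivative at c is positive
  have hHc' : 0 < H' c := by
    have hc2s : c/2 ∈ s := ⟨(half_pos hc).le, by linarith⟩
    have hm0 : 0 < H (c/2) / c := div_pos (hHpos (c/2) ⟨half_pos hc, by linarith⟩) hc
    have hslope : Tendsto (slope H c) (𝓝[s \ {c}] c) (𝓝 (H' c)) :=
      hasDerivWithinAt_iff_tendsto_slope.mp (hC1 c hcs)
    have hne : (𝓝[s \ {c}] c).NeBot := by
      rw [hsdef, Set.Icc_sdiff_right]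
      apply mem_closure_iff_nhdsWithin_neBot.mp
      rw [closure_Ico hc.ne]
      exact ⟨hc.le, le_refl c⟩
    have hev : ∀ᶠ x in 𝓝[s \ {c}] c, H (c/2) / c ≤ slope H c x := by
      have h1 : ∀ᶠ x in 𝓝[s \ {c}] c, c/2 < x :=
        eventually_nhdsWithin_of_eventually_nhds (eventually_gt_nhds (by linarith))
      filter_upwards [h1, self_mem_nhdsWithin] with x hx1 hx2
      have hxs : x ∈ s := hx2.1
      have hxc : x < c := lt_of_le_of_ne hxs.2 hx2.2
      have hx0 : 0 < x := lt_trans (half_pos hc) hx1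
      have hsl := hconv.convexOn.slope_mono_adjacent h0s hcs hx0 hxc
      rw [hH0, sub_zero, sub_zero] at hsl
      have hHx : H (c/2) ≤ H x := (hHmono hc2s hxs hx1).le
      have h2 : H (c/2) / c ≤ H x / x := div_le_div₀ (hHnn x hxs) hHx hx0 hxs.2
      have h3 : slope H c x = (H c - H x) / (c - x) := by
        rw [slope_def_field, ← neg_sub (H c) (H x), ← neg_sub c x, neg_div_neg_eq]
      rw [h3]
      linarith
    exact lt_of_lt_of_le hm0 (ge_of_tendsto hslope hev)
  -- bijectivity
  have hmaps : Set.MapsTo L (Set.Ici 0) (Set.Ico 0 c) := by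
    intro y hy
    rcases eq_or_lt_of_le (mem_Ici.mp hy) with h | h
    · rw [← h, hL0]; exact ⟨le_refl 0, hc⟩
    · obtain ⟨x, -, -, -, hLpos, -, hLlt⟩ := hkey y h
      exact ⟨hLpos.le, hLlt⟩
  have hsurj : Set.SurjOn L (Set.Ici 0) (Set.Ico 0 c) := by
    intro v hv
    rcases eq_or_lt_of_le hv.1 with h | h
    · exact ⟨0, self_mem_Ici, by rw [hL0, ← h]⟩
    · have hcv : 0 < c - v := sub_pos.mpr hv.2
      set M := H c / (c - v) + 1 with hMdef
      have hM1 : (1:ℝ) ≤ M := le_add_of_nonneg_left (div_nonneg (hHnn c hcs) hcv.le)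
      have hM0 : 0 < M := lt_of_lt_of_le one_pos hM1
      have hub : v < L M := by
        have h1 : c * M - H c ≤ g M := hgub M c hcs
        have h2 : (c - v) * M = H c + (c - v) := by
          rw [hMdef]; field_simp
        have hLM : L M = g M / M := hL M hM0
        rw [hLM, lt_div_iff₀ hM0]
        nlinarith
      have hLMc : ContinuousOn L (Set.Icc 0 M) := hLcont.mono Icc_subset_Ici_self
      have hivt := intermediate_value_Icc hM0.le hLMc
      have hvmem : v ∈ Set.Icc (L 0) (L M) := by rw [hL0]; exact ⟨h.le, hub.le⟩
      obtain ⟨y, hy, hLy⟩ := hivt hvmem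
      exact ⟨y, mem_Ici.mpr hy.1, hLy⟩
  obtain ⟨x, -, -, -, hLpos, -, hLlt⟩ := hkey (H' c) hHc'
  exact ⟨hLcont, hmono, ⟨hmaps, hmono.injOn, hsurj⟩, hLpos, hLlt⟩
end

section
/- Let x(t) = (H')^{-1}(κM/t) where H(x) = √x·e^{-1/x} (so H'(x) = (e^{-1/x}/√x)(1/2 + 1/x)) and κ, M > 0. Then x(t)·(ln t) → 1 as t → ∞; i.e., x(t) is asymptotically equivalent to 1/ln(t) as t → ∞. -/
open Real Set Filter Topology

lemma aux_g_lim (c : ℝ) :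
    Tendsto (fun y : ℝ => y * c + 1 + y * (Real.log y / 2)
      - (y * Real.log (y + 2) - y * Real.log 2 - y * Real.log y)) (𝓝 (0:ℝ)) (𝓝 1) := by
  have h1 : Tendsto (fun y : ℝ => y * Real.log y) (𝓝 (0:ℝ)) (𝓝 0) := by
    simpa using Real.continuous_mul_log.tendsto 0
  have h2 : Tendsto (fun y : ℝ => y * Real.log (y + 2)) (𝓝 (0:ℝ)) (𝓝 0) := by
    have hlog : Tendsto (fun y : ℝ => Real.log (y + 2)) (𝓝 (0:ℝ)) (𝓝 (Real.log 2)) := by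
      have : ContinuousAt Real.log 2 := Real.continuousAt_log (by norm_num)
      have h0 : Tendsto (fun y : ℝ => y + 2) (𝓝 (0:ℝ)) (𝓝 2) := by
        simpa using (tendsto_id.add_const 2 : Tendsto (fun y : ℝ => y + 2) (𝓝 (0:ℝ)) (𝓝 (0+2)))
      exact this.tendsto.comp h0
    simpa using tendsto_id.mul hlog
  have h3 : Tendsto (fun y : ℝ => y * c) (𝓝 (0:ℝ)) (𝓝 0) := by
    simpa [Pi.mul_def] using (continuous_id.mul (continuous_const (y := c))).tendsto 0
  have h4 : Tendsto (fun y : ℝ => y * Real.log 2) (𝓝 (0:ℝ)) (𝓝 0) := by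
    simpa [Pi.mul_def] using (continuous_id.mul (continuous_const (y := Real.log 2))).tendsto 0
  have h5 : Tendsto (fun y : ℝ => y * (Real.log y / 2)) (𝓝 (0:ℝ)) (𝓝 0) := by
    have := h1.div_const 2
    simpa [mul_div_assoc] using this
  have hc1 : Tendsto (fun _ : ℝ => (1:ℝ)) (𝓝 (0:ℝ)) (𝓝 (1:ℝ)) := tendsto_const_nhds
  have := ((h3.add hc1).add h5).sub ((h2.sub h4).sub h1)
  simpa using this

theorem stmt_15 (κ M : ℝ) (hκ : 0 < κ) (hM : 0 < M)
    (Hd : ℝ → ℝ)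
    (hHd : ∀ x > (0:ℝ), Hd x = Real.exp (-1 / x) / Real.sqrt x * (1 / 2 + 1 / x))
    (x : ℝ → ℝ)
    (hxpos : ∀ᶠ t in atTop, 0 < x t)
    (hxlim : Tendsto x atTop (nhds 0))
    (hxeq : ∀ᶠ t in atTop, Hd (x t) = κ * M / t) :
    Tendsto (fun t => x t * Real.log t) atTop (nhds 1) := by
  set g : ℝ → ℝ := fun y => y * Real.log (κ * M) + 1 + y * (Real.log y / 2)
      - (y * Real.log (y + 2) - y * Real.log 2 - y * Real.log y) with hg
  have hcomp : Tendsto (fun t => g (x t)) atTop (𝓝 1) :=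
    (aux_g_lim (Real.log (κ * M))).comp hxlim
  refine hcomp.congr' ?_
  filter_upwards [hxpos, hxeq, eventually_gt_atTop (0:ℝ)] with t hx0 heq ht0
  have hκM : 0 < κ * M := mul_pos hκ hM
  -- log of the equation
  have hlogHd : Real.log (Hd (x t)) = Real.log (κ * M) - Real.log t := by
    rw [heq, Real.log_div (ne_of_gt hκM) (ne_of_gt ht0)]
  -- expand log Hd
  have hxne : x t ≠ 0 := ne_of_gt hx0
  have hsum : 0 < 1/2 + 1/(x t) := by positivity
  have hlogHd2 : Real.log (Hd (x t)) =
      -1 / (x t) - Real.log (x t) / 2 + Real.log (1/2 + 1/(x t)) := by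
    rw [hHd (x t) hx0]
    rw [Real.log_mul (by positivity) (ne_of_gt hsum),
        Real.log_div (Real.exp_ne_zero _) (by positivity),
        Real.log_exp, Real.log_sqrt hx0.le]
  -- log(1/2 + 1/x) = log(x+2) - log 2 - log x
  have hlogsum : Real.log (1/2 + 1/(x t)) =
      Real.log (x t + 2) - Real.log 2 - Real.log (x t) := by
    have : 1/2 + 1/(x t) = (x t + 2) / (2 * x t) := by field_simp
    rw [this, Real.log_div (by positivity) (by positivity), Real.log_mul (by norm_num) hxne]
    ring
  -- conclude
  have hlogt : Real.log t = Real.log (κ * M)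
      - (-1 / (x t) - Real.log (x t) / 2 + Real.log (1/2 + 1/(x t))) := by
    rw [← hlogHd2, hlogHd]; ring
  have hinv : x t * (-1 / (x t)) = -1 := by field_simp
  show g (x t) = x t * Real.log t
  rw [hg, hlogt, hlogsum]
  have : x t * (Real.log (κ * M) - (-1 / x t - Real.log (x t) / 2 +
      (Real.log (x t + 2) - Real.log 2 - Real.log (x t)))) =
      x t * Real.log (κ * M) - x t * (-1 / x t) + x t * (Real.log (x t) / 2)
      - (x t * Real.log (x t + 2) - x t * Real.log 2 - x t * Real.log (x t)) := by ring
  rw [this, hinv]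
  ring
end

section
/- Let p > 2, H(x) = √x·e^{-(ln(1/√x))^p} and x(t) = (H')^{-1}(κM/t) for κ, M > 0. Then x(t) is asymptotically equivalent to e^{-2(ln t)^{1/p}} as t → ∞, in the sense that ln(x(t))/(−2(ln t)^{1/p}) → 1 as t → ∞. -/
open Real Set Filter Topology

lemma aux_lim_16 (p C : ℝ) (hp : 2 < p) :
    Tendsto (fun s : ℝ => (C + s ^ p - s - Real.log (1 + p * s ^ (p - 1))) / s ^ p)
      atTop (𝓝 1) := by
  have hp0 : (0:ℝ) < p := by linarith
  have hsp : Tendsto (fun s : ℝ => s ^ p) atTop atTop := tendsto_rpow_atTop hp0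
  have h1 : Tendsto (fun s : ℝ => C / s ^ p) atTop (𝓝 0) :=
    tendsto_const_nhds.div_atTop hsp
  have h2 : Tendsto (fun s : ℝ => s / s ^ p) atTop (𝓝 0) := by
    have h : Tendsto (fun s : ℝ => s ^ (1 - p)) atTop (𝓝 0) := by
      have := tendsto_rpow_neg_atTop (y := p - 1) (by linarith)
      simpa [neg_sub] using this
    refine h.congr' ?_
    filter_upwards [eventually_gt_atTop 0] with s hs
    rw [Real.rpow_sub hs, Real.rpow_one]
  have h3 : Tendsto (fun s : ℝ => Real.log (1 + p * s ^ (p - 1)) / s ^ p) atTop (𝓝 0) := by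
    have hg : Tendsto (fun s : ℝ => p / s) atTop (𝓝 0) :=
      tendsto_const_nhds.div_atTop tendsto_id
    refine squeeze_zero' ?_ ?_ hg
    · filter_upwards [eventually_gt_atTop 0] with s hs
      have hb : (0:ℝ) ≤ p * s ^ (p - 1) := by positivity
      exact div_nonneg (Real.log_nonneg (by linarith)) (Real.rpow_pos_of_pos hs p).le
    · filter_upwards [eventually_gt_atTop 0] with s hs
      have hsne : s ≠ 0 := hs.ne'
      have hspne : s ^ p ≠ 0 := (Real.rpow_pos_of_pos hs p).ne'
      have hb : (0:ℝ) < p * s ^ (p - 1) := by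
        have := Real.rpow_pos_of_pos hs (p - 1); positivity
      have hlog : Real.log (1 + p * s ^ (p - 1)) ≤ p * s ^ (p - 1) := by
        have := Real.log_le_sub_one_of_pos (by linarith : 0 < 1 + p * s ^ (p - 1))
        linarith
      have hkey : p * s ^ (p - 1) / s ^ p = p / s := by
        rw [Real.rpow_sub hs, Real.rpow_one]
        field_simp
      calc Real.log (1 + p * s ^ (p - 1)) / s ^ p
          ≤ p * s ^ (p - 1) / s ^ p := by
            gcongr
        _ = p / s := hkey
  have hfin : Tendsto
      (fun s : ℝ => C / s ^ p + 1 - s / s ^ p - Real.log (1 + p * s ^ (p - 1)) / s ^ p)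
      atTop (𝓝 (0 + 1 - 0 - 0)) :=
    ((h1.add tendsto_const_nhds).sub h2).sub h3
  norm_num at hfin
  refine hfin.congr' ?_
  filter_upwards [eventually_gt_atTop 0] with s hs
  have hspne : s ^ p ≠ 0 := (Real.rpow_pos_of_pos hs p).ne'
  rw [eq_comm, sub_div, sub_div, add_div, div_self hspne]

theorem stmt_16 (p κ M : ℝ) (hp : 2 < p) (hκ : 0 < κ) (hM : 0 < M)
    (Hd : ℝ → ℝ)
    (hHd : ∀ x > (0:ℝ),
      Hd x = Real.exp (-(Real.log (1 / Real.sqrt x)) ^ p) / (2 * Real.sqrt x) *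
        (1 + p * (Real.log (1 / Real.sqrt x)) ^ (p - 1)))
    (x : ℝ → ℝ)
    (hxpos : ∀ᶠ t in atTop, 0 < x t)
    (hxlim : Tendsto x atTop (nhds 0))
    (hxeq : ∀ᶠ t in atTop, Hd (x t) = κ * M / t) :
    Tendsto (fun t => Real.log (x t) / (-2 * (Real.log t) ^ ((1:ℝ) / p)))
      atTop (nhds 1) := by
  have hp0 : (0:ℝ) < p := by linarith
  set y : ℝ → ℝ := fun t => Real.log (1 / Real.sqrt (x t)) with hy_def
  have hy_eq : ∀ᶠ t in atTop, y t = -(Real.log (x t)) / 2 := by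
    filter_upwards [hxpos] with t ht
    simp [hy_def, one_div, Real.log_inv, Real.log_sqrt ht.le, neg_div]
  have hlogx : Tendsto (fun t => Real.log (x t)) atTop atBot := by
    have h : Tendsto x atTop (𝓝[>] 0) :=
      tendsto_nhdsWithin_of_tendsto_nhds_of_eventually_within x hxlim hxpos
    exact Real.tendsto_log_nhdsGT_zero.comp h
  have hy_top : Tendsto y atTop atTop := by
    refine Tendsto.congr' (EventuallyEq.symm hy_eq) ?_
    have h1 : Tendsto (fun t => -Real.log (x t)) atTop atTop :=
      tendsto_neg_atTop_iff.mpr hlogx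
    exact h1.atTop_div_const (by norm_num)
  have hy_pos : ∀ᶠ t in atTop, 1 < y t := hy_top.eventually_gt_atTop 1
  set C : ℝ := Real.log (κ * M) + Real.log 2 with hC
  have key : ∀ᶠ t in atTop,
      Real.log t = C + (y t) ^ p - y t - Real.log (1 + p * (y t) ^ (p - 1)) := by
    filter_upwards [hxpos, hxeq, hy_pos, eventually_gt_atTop 1] with t hx heq hy ht
    have hsx : 0 < Real.sqrt (x t) := Real.sqrt_pos.mpr hx
    have hy0 : 0 < y t := by linarith
    have hyp1 : 0 < (y t) ^ (p - 1) := Real.rpow_pos_of_pos hy0 _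
    have hB : 0 < 1 + p * (y t) ^ (p - 1) := by positivity
    have hHdt : Hd (x t) =
        Real.exp (-(y t) ^ p) / (2 * Real.sqrt (x t)) * (1 + p * (y t) ^ (p - 1)) :=
      hHd _ hx
    have hlogHd : Real.log (Hd (x t)) = Real.log (κ * M) - Real.log t := by
      rw [heq, Real.log_div (by positivity) (by linarith)]
    have hlogsx : Real.log (Real.sqrt (x t)) = - y t := by
      simp [hy_def, one_div, Real.log_inv]
    have hlogHd2 : Real.log (Hd (x t)) =
        -(y t) ^ p - (Real.log 2 + (- y t)) + Real.log (1 + p * (y t) ^ (p - 1)) := by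
      rw [hHdt, Real.log_mul (by positivity) hB.ne', Real.log_div (Real.exp_ne_zero _)
        (by positivity), Real.log_exp, Real.log_mul (by norm_num) hsx.ne', hlogsx]
    have h := hlogHd.symm.trans hlogHd2
    rw [hC]
    linarith
  have hF := aux_lim_16 p C hp
  have hlim1 : Tendsto (fun t => Real.log t / (y t) ^ p) atTop (𝓝 1) := by
    refine (hF.comp hy_top).congr' ?_
    filter_upwards [key] with t ht
    simp only [Function.comp_apply]
    rw [ht]
  have hlim2 : Tendsto (fun t => (Real.log t / (y t) ^ p) ^ ((1:ℝ) / p)) atTop (𝓝 1) := by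
    have h := hlim1.rpow_const (p := (1:ℝ) / p) (Or.inl one_ne_zero)
    simpa using h
  have hlim3 : Tendsto (fun t => (Real.log t) ^ ((1:ℝ) / p) / y t) atTop (𝓝 1) := by
    refine hlim2.congr' ?_
    filter_upwards [hy_pos, eventually_ge_atTop 1] with t hy ht
    have hy0 : 0 < y t := by linarith
    have hlt : 0 ≤ Real.log t := Real.log_nonneg (by linarith)
    rw [Real.div_rpow hlt (Real.rpow_pos_of_pos hy0 p).le, ← Real.rpow_mul hy0.le,
      mul_one_div_cancel hp0.ne', Real.rpow_one]
  have hlim4 : Tendsto (fun t => y t / (Real.log t) ^ ((1:ℝ) / p)) atTop (𝓝 1) := by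
    have h := hlim3.inv₀ one_ne_zero
    norm_num at h
    refine h.congr' ?_
    filter_upwards [] with t
    rw [one_div]
  refine hlim4.congr' ?_
  filter_upwards [hy_eq] with t h
  have hlx : Real.log (x t) = -2 * y t := by rw [h]; ring
  rw [hlx, mul_div_mul_left _ _ (by norm_num : (-2:ℝ) ≠ 0)]
end

section
/- Let p > 2, q > 1, H(x) = x^{(p+1)/2}·(ln(1/√x))^q, and x(t) = (H')^{-1}(κM/t) for constants κ, M > 0. Then there exists an explicit constant D > 0 (depending on κ, M, p, q) such that x(t)/(D·t^{-2/(p-1)}·(ln t)^{-2q/(p-1)}) → 1 as t → ∞. -/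
open Real Set Filter Topology

theorem stmt_17 (p q κ M : ℝ) (hp : 2 < p) (hq : 1 < q) (hκ : 0 < κ) (hM : 0 < M)
    (Hd : ℝ → ℝ)
    (hHd : ∀ x > (0:ℝ),
      Hd x = 1 / 2 * x ^ ((p - 1) / 2) * (Real.log (1 / Real.sqrt x)) ^ q *
        (p + 1 - q * (Real.log (1 / Real.sqrt x))⁻¹))
    (x : ℝ → ℝ)
    (hxpos : ∀ᶠ t in atTop, 0 < x t)
    (hxlim : Tendsto x atTop (nhds 0))
    (hxeq : ∀ᶠ t in atTop, Hd (x t) = κ * M / t) :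
    ∃ D > (0:ℝ),
      Tendsto
        (fun t => x t /
          (D * t ^ (-(2 / (p - 1))) * (Real.log t) ^ (-(2 * q / (p - 1)))))
        atTop (nhds 1) := by
  set α : ℝ := (p - 1) / 2 with hα_def
  have hα : 0 < α := by simp only [hα_def]; linarith
  set L : ℝ → ℝ := fun t => Real.log (1 / Real.sqrt (x t)) with hL_def
  -- L t = -(1/2) log (x t) eventually
  have hLx : ∀ᶠ t in atTop, L t = -(1 / 2) * Real.log (x t) := by
    filter_upwards [hxpos] with t ht
    rw [hL_def]
    simp only
    rw [one_div, Real.log_inv, Real.log_sqrt ht.le]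
    ring
  -- L → ∞
  have hxin : Tendsto x atTop (𝓝[>] 0) :=
    tendsto_nhdsWithin_of_tendsto_nhds_of_eventually_within _ hxlim hxpos
  have hlogx : Tendsto (fun t => Real.log (x t)) atTop atBot :=
    Real.tendsto_log_nhdsGT_zero.comp hxin
  have hL : Tendsto L atTop atTop := by
    have h1 : Tendsto (fun t => -(1 / 2) * Real.log (x t)) atTop atTop := by
      have h2 := (tendsto_neg_atBot_atTop.comp hlogx).const_mul_atTop
        (show (0:ℝ) < 1/2 by norm_num)
      refine h2.congr fun t => ?_
      simp only [Function.comp_apply]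
      ring
    exact Tendsto.congr' (hLx.mono fun t h => h.symm) h1
  have hLgt : ∀ᶠ t in atTop, max 1 q < L t := hL.eventually_gt_atTop _
  -- the equation
  have heq : ∀ᶠ t in atTop,
      1 / 2 * (x t) ^ α * (L t) ^ q * (p + 1 - q * (L t)⁻¹) = κ * M / t := by
    filter_upwards [hxpos, hxeq] with t h1 h2
    rw [← h2, hHd _ h1]
  set c : ℝ := 2 * κ * M / (p + 1) with hc_def
  have hc : 0 < c := by
    apply div_pos (by positivity); linarith
  set B : ℝ → ℝ := fun t => (x t) ^ α * (L t) ^ q * t with hB_def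
  have hB_eq : ∀ᶠ t in atTop, B t = 2 * κ * M / (p + 1 - q * (L t)⁻¹) := by
    filter_upwards [heq, hLgt, eventually_gt_atTop (0:ℝ)] with t h1 h2 h3
    have hLq : q < L t := lt_of_le_of_lt (le_max_right 1 q) h2
    have hL1 : (1:ℝ) < L t := lt_of_le_of_lt (le_max_left 1 q) h2
    have hLpos : (0:ℝ) < L t := by linarith
    have hP : 0 < p + 1 - q * (L t)⁻¹ := by
      have : q * (L t)⁻¹ < 1 := by
        rw [mul_inv_lt_iff₀ hLpos]; linarith
      linarith
    rw [eq_div_iff h3.ne'] at h1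
    rw [hB_def]
    simp only
    rw [eq_div_iff hP.ne']
    linear_combination 2 * h1
  have hinvL : Tendsto (fun t => (L t)⁻¹) atTop (𝓝 0) := hL.inv_tendsto_atTop
  have hB : Tendsto B atTop (𝓝 c) := by
    have h1 : Tendsto (fun t => 2 * κ * M / (p + 1 - q * (L t)⁻¹)) atTop (𝓝 c) := by
      have h2 : Tendsto (fun t => p + 1 - q * (L t)⁻¹) atTop (𝓝 (p + 1)) := by
        have := (hinvL.const_mul q).const_sub (p + 1)
        simpa using this
      exact Tendsto.div (tendsto_const_nhds : Tendsto (fun _ : ℝ => 2 * κ * M) atTop _)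
        h2 (by linarith)
    exact Tendsto.congr' (hB_eq.mono fun t h => h.symm) h1
  have hlogB : Tendsto (fun t => Real.log (B t)) atTop (𝓝 (Real.log c)) :=
    ((Real.continuousAt_log hc.ne').tendsto.comp hB :)
  have hlogLL : Tendsto (fun t => Real.log (L t) / L t) atTop (𝓝 0) :=
    (Real.isLittleO_log_id_atTop.tendsto_div_nhds_zero.comp hL :)
  -- ratio log t / L t → 2α
  have hratio : Tendsto (fun t => Real.log t / L t) atTop (𝓝 (2 * α)) := by
    have hid : ∀ᶠ t in atTop, Real.log t / L t =
        2 * α - q * (Real.log (L t) / L t) + Real.log (B t) * (L t)⁻¹ := by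
      filter_upwards [hxpos, hLgt, hLx, eventually_gt_atTop (1:ℝ)] with t h1 h2 h3 h4
      have hL1 : (1:ℝ) < L t := lt_of_le_of_lt (le_max_left 1 q) h2
      have hLpos : (0:ℝ) < L t := by linarith
      have ht0 : (0:ℝ) < t := by linarith
      have hxα : (0:ℝ) < (x t) ^ α := Real.rpow_pos_of_pos h1 α
      have hLq : (0:ℝ) < (L t) ^ q := Real.rpow_pos_of_pos hLpos q
      have hlB : Real.log (B t) = α * Real.log (x t) + q * Real.log (L t) + Real.log t := by
        rw [hB_def]
        simp only
        rw [Real.log_mul (by positivity) ht0.ne', Real.log_mul hxα.ne' hLq.ne',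
          Real.log_rpow h1, Real.log_rpow hLpos]
      have hlx : Real.log (x t) = -2 * L t := by rw [h3]; ring
      rw [hlB, hlx]
      field_simp
      ring
    have hlim : Tendsto (fun t => 2 * α - q * (Real.log (L t) / L t)
        + Real.log (B t) * (L t)⁻¹) atTop (𝓝 (2 * α)) := by
      have h1 := (hlogLL.const_mul q).const_sub (2 * α)
      have h2 := hlogB.mul hinvL
      have := h1.add h2
      simpa using this
    exact Tendsto.congr' (hid.mono fun t h => h.symm) hlim
  -- the constant
  refine ⟨c ^ (1/α) * (2 * α) ^ (q/α), by positivity, ?_⟩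
  set D : ℝ := c ^ (1/α) * (2 * α) ^ (q/α) with hD_def
  have hD : 0 < D := by positivity
  have hfin : Tendsto (fun t => (B t) ^ (1/α) * (Real.log t / L t) ^ (q/α) / D)
      atTop (𝓝 1) := by
    have h1 : Tendsto (fun t => (B t) ^ (1/α)) atTop (𝓝 (c ^ (1/α))) :=
      hB.rpow_const (Or.inl hc.ne')
    have h2 : Tendsto (fun t => (Real.log t / L t) ^ (q/α)) atTop
        (𝓝 ((2 * α) ^ (q/α))) :=
      hratio.rpow_const (Or.inl (by positivity))
    have h3 := (h1.mul h2).div_const D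
    rw [← hD_def, div_self hD.ne'] at h3
    exact h3
  refine Tendsto.congr' ?_ hfin
  filter_upwards [hxpos, hLgt, eventually_gt_atTop (1:ℝ)] with t h1 h2 h3
  have hL1 : (1:ℝ) < L t := lt_of_le_of_lt (le_max_left 1 q) h2
  have hLpos : (0:ℝ) < L t := by linarith
  have ht0 : (0:ℝ) < t := by linarith
  have hlt : (0:ℝ) < Real.log t := Real.log_pos h3
  have e1 : (-(2 / (p - 1)) : ℝ) = -(1/α) := by
    rw [hα_def, one_div_div]
  have e2 : (-(2 * q / (p - 1)) : ℝ) = -(q/α) := by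
    rw [hα_def, div_div_eq_mul_div]; ring
  have hBpow : (B t) ^ (1/α) = x t * (L t) ^ (q/α) * t ^ (1/α) := by
    rw [hB_def]
    simp only
    rw [Real.mul_rpow (by positivity) ht0.le, Real.mul_rpow (by positivity) (by positivity),
      ← Real.rpow_mul h1.le, ← Real.rpow_mul hLpos.le, mul_one_div, mul_one_div,
      div_self hα.ne', Real.rpow_one]
  have hT : (0:ℝ) < t ^ (1/α) := Real.rpow_pos_of_pos ht0 _
  have hLT : (0:ℝ) < (L t) ^ (q/α) := Real.rpow_pos_of_pos hLpos _
  have hGT : (0:ℝ) < (Real.log t) ^ (q/α) := Real.rpow_pos_of_pos hlt _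
  rw [hBpow, Real.div_rpow hlt.le hLpos.le, e1, e2, Real.rpow_neg ht0.le, Real.rpow_neg hlt.le]
  field_simp
end

section
/- Let E : [0,∞) → [0,∞) be a nonincreasing absolutely continuous function, let η > 0, M > 0, and let w : [0,η) → [0,∞) be strictly increasing, continuous, onto, with w(0)=0, and suppose E takes values in [0,η) and ∫_S^T w(E(t))·E(t) dt ≤ M·E(S) for all 0 ≤ S ≤ T. For r ∈ (0,η) define K_r(τ) = ∫_τ^r dy/(y·w(y)) and ψ_r(z) = z + K_r(w^{-1}(1/z)) for z ≥ 1/w(r). Then for any r ∈ (0,η) with (1/M)·∫_0^∞ E(τ)·w(E(τ)) dτ ≤ r, one has E(t) ≤ w^{-1}(1/ψ_r^{-1}(t/M)) for all t ≥ M/w(r); in particular E(t) → 0 as t → ∞. -/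
open Real Set Filter Topology MeasureTheory intervalIntegral

set_option maxHeartbeats 2000000 in
theorem stmt_19 (η M r : ℝ) (hη : 0 < η) (hM : 0 < M) (hr : r ∈ Set.Ioo (0:ℝ) η)
    (E : ℝ → ℝ)
    (hErange : ∀ t ≥ (0:ℝ), E t ∈ Set.Ico (0:ℝ) η)
    (hE_anti : AntitoneOn E (Set.Ici 0))
    -- absolute continuity of E on [0,∞): E is an indefinite integral of some E'
    (hE_AC : ∃ E' : ℝ → ℝ,
      (∀ t ≥ (0:ℝ), IntervalIntegrable E' MeasureTheory.volume 0 t) ∧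
      ∀ t ≥ (0:ℝ), E t = E 0 + ∫ s in (0:ℝ)..t, E' s)
    (w winv : ℝ → ℝ)
    (hw0 : w 0 = 0)
    (hwmono : StrictMonoOn w (Set.Ico 0 η))
    (hwcont : ContinuousOn w (Set.Ico 0 η))
    (hwsurj : Set.BijOn w (Set.Ico 0 η) (Set.Ici 0))
    (hwinv_left : ∀ s ∈ Set.Ico (0:ℝ) η, winv (w s) = s)
    (hwinv_right : ∀ y ≥ (0:ℝ), w (winv y) = y)
    -- the weighted integral inequality
    (hIneq : ∀ S T : ℝ, 0 ≤ S → S ≤ T →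
      (∫ t in S..T, w (E t) * E t) ≤ M * E S)
    (hInt0 : IntegrableOn (fun τ => E τ * w (E τ)) (Set.Ioi 0))
    (hrcond : (1 / M) * ∫ τ in Set.Ioi (0:ℝ), E τ * w (E τ) ≤ r)
    (K ψ ψinv : ℝ → ℝ)
    (hK : ∀ τ ∈ Set.Ioc (0:ℝ) r, K τ = ∫ y in τ..r, 1 / (y * w y))
    (hψ : ∀ z ≥ 1 / w r, ψ z = z + K (winv (1 / z)))
    (hψinv_left : ∀ z ≥ 1 / w r, ψinv (ψ z) = z)
    (hψinv_right : ∀ y ≥ 1 / w r, ψ (ψinv y) = y) :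
    (∀ t ≥ M / w r, E t ≤ winv (1 / ψinv (t / M))) ∧
    Tendsto E atTop (nhds 0) := by
  obtain ⟨hr0, hrη⟩ := hr
  have h0mem : (0:ℝ) ∈ Set.Ico (0:ℝ) η := ⟨le_rfl, hη⟩
  have hrmem : r ∈ Set.Ico (0:ℝ) η := ⟨hr0.le, hrη⟩
  have hwr : 0 < w r := by
    have := hwmono h0mem hrmem hr0
    rwa [hw0] at this
  -- w is nonnegative, positive on positives
  have hwnn : ∀ s ∈ Set.Ico (0:ℝ) η, 0 ≤ w s := by
    intro s hs
    have := hwmono.monotoneOn h0mem hs hs.1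
    rwa [hw0] at this
  have hwpos : ∀ s ∈ Set.Ico (0:ℝ) η, 0 < s → 0 < w s := by
    intro s hs hs0
    have := hwmono h0mem hs hs0
    rwa [hw0] at this
  have hwle : ∀ s ∈ Set.Ico (0:ℝ) η, ∀ s' ∈ Set.Ico (0:ℝ) η, w s ≤ w s' → s ≤ s' := by
    intro s hs s' hs' h
    exact (hwmono.le_iff_le hs hs').mp h
  -- winv maps [0,∞) into [0,η)
  have hwinv_mem : ∀ y ≥ (0:ℝ), winv y ∈ Set.Ico (0:ℝ) η := by
    intro y hy
    obtain ⟨s, hs, hws⟩ := hwsurj.2.2 (Set.mem_Ici.2 hy)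
    rw [← hws, hwinv_left s hs]; exact hs
  have hwinvmono : ∀ y₁ y₂ : ℝ, 0 ≤ y₁ → y₁ ≤ y₂ → winv y₁ ≤ winv y₂ := by
    intro y₁ y₂ h1 h12
    refine hwle _ (hwinv_mem _ h1) _ (hwinv_mem _ (h1.trans h12)) ?_
    rw [hwinv_right _ h1, hwinv_right _ (h1.trans h12)]; exact h12
  -- nonnegativity of E and the integrand
  have hEnn : ∀ t ≥ (0:ℝ), 0 ≤ E t := fun t ht => (hErange t ht).1
  have hEwnn : ∀ τ ≥ (0:ℝ), 0 ≤ E τ * w (E τ) :=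
    fun τ hτ => mul_nonneg (hEnn τ hτ) (hwnn _ (hErange τ hτ))
  -- interval integrability of the integrand on [S,t] for 0 ≤ S
  have hIntSt : ∀ S t : ℝ, 0 ≤ S → S ≤ t →
      IntervalIntegrable (fun τ => E τ * w (E τ)) volume S t := by
    intro S t hS hSt
    rw [intervalIntegrable_iff_integrableOn_Ioc_of_le hSt]
    exact hInt0.mono_set (fun x hx => lt_of_le_of_lt hS hx.1)
  -- lower bound by the value at the right endpoint
  have hlow : ∀ S t : ℝ, 0 ≤ S → S ≤ t →
      (t - S) * (E t * w (E t)) ≤ ∫ τ in S..t, E τ * w (E τ) := by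
    intro S t hS hSt
    have ht0 : (0:ℝ) ≤ t := hS.trans hSt
    have hmono : ∀ x ∈ Set.Icc S t, E t * w (E t) ≤ E x * w (E x) := by
      intro x hx
      have hx0 : (0:ℝ) ≤ x := hS.trans hx.1
      have hEx : E t ≤ E x := hE_anti hx0 ht0 hx.2
      have hwx : w (E t) ≤ w (E x) :=
        hwmono.monotoneOn (hErange t ht0) (hErange x hx0) hEx
      exact mul_le_mul hEx hwx (hwnn _ (hErange t ht0)) (hEnn x hx0)
    calc (t - S) * (E t * w (E t)) = ∫ _ in S..t, E t * w (E t) := by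
          rw [intervalIntegral.integral_const, smul_eq_mul]
      _ ≤ ∫ τ in S..t, E τ * w (E τ) :=
          intervalIntegral.integral_mono_on hSt (intervalIntegrable_const)
            (hIntSt S t hS hSt) hmono
  -- integral over [S,t] bounded by integral over (S,∞)
  have hIoiBound : ∀ S t : ℝ, 0 ≤ S → S ≤ t →
      (∫ τ in S..t, E τ * w (E τ)) ≤ ∫ τ in Set.Ioi S, E τ * w (E τ) := by
    intro S t hS hSt
    rw [intervalIntegral.integral_of_le hSt]
    refine MeasureTheory.setIntegral_mono_set
      (hInt0.mono_set (fun x hx => lt_of_le_of_lt hS hx)) ?_ ?_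
    · have : ∀ᵐ x ∂volume.restrict (Set.Ioi S), 0 ≤ E x * w (E x) := by
        rw [MeasureTheory.ae_restrict_iff' measurableSet_Ioi]
        exact Filter.Eventually.of_forall fun x hx => hEwnn x (hS.trans hx.le)
      exact this
    · exact Filter.Eventually.of_forall (fun x hx => hx.1)
  -- the improper integral over (S,∞) is at most M * E S
  have hup : ∀ S : ℝ, 0 ≤ S → (∫ τ in Set.Ioi S, E τ * w (E τ)) ≤ M * E S := by
    intro S hS
    have hT : Tendsto (fun T => ∫ τ in S..T, E τ * w (E τ)) atTop
        (𝓝 (∫ τ in Set.Ioi S, E τ * w (E τ))) :=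
      MeasureTheory.intervalIntegral_tendsto_integral_Ioi S
        (hInt0.mono_set (fun x hx => lt_of_le_of_lt hS hx)) tendsto_id
    refine le_of_tendsto hT ?_
    filter_upwards [eventually_ge_atTop S] with T hTS
    have := hIneq S T hS hTS
    simpa [mul_comm] using this
  -- continuity of E on [0,∞)
  obtain ⟨E', hE'int, hE'eq⟩ := hE_AC
  have hEcont : ContinuousOn E (Set.Ici 0) := by
    intro t₀ ht₀
    have ht₀' : (0:ℝ) ≤ t₀ := ht₀
    have hIcc : Set.Icc (0:ℝ) (t₀+1) ∈ 𝓝[Set.Ici 0] t₀ := by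
      refine Filter.mem_of_superset
        (inter_mem_nhdsWithin _ (Iio_mem_nhds (show t₀ < t₀+1 by linarith))) ?_
      rintro x ⟨hx1, hx2⟩
      exact ⟨hx1, le_of_lt hx2⟩
    have hprim : ContinuousOn (fun t => E 0 + ∫ s in (0:ℝ)..t, E' s)
        (Set.Icc 0 (t₀+1)) := by
      have h1 : ContinuousOn (fun t => ∫ s in (0:ℝ)..t, E' s) (Set.uIcc 0 (t₀+1)) :=
        intervalIntegral.continuousOn_primitive_interval'
          (hE'int (t₀+1) (by linarith)) (by simp [Set.uIcc_of_le, ht₀'])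
      rw [Set.uIcc_of_le (by linarith : (0:ℝ) ≤ t₀+1)] at h1
      exact continuousOn_const.add h1
    have heq : Set.EqOn E (fun t => E 0 + ∫ s in (0:ℝ)..t, E' s) (Set.Icc 0 (t₀+1)) :=
      fun x hx => hE'eq x hx.1
    have := (hprim t₀ ⟨ht₀', by linarith⟩).congr heq (hE'eq t₀ ht₀')
    exact this.mono_of_mem_nhdsWithin hIcc
  -- the globally continuous integrand g
  set Et : ℝ → ℝ := fun τ => E (max τ 0) with hEt_def
  have hEtcont : Continuous Et :=
    hEcont.comp_continuous (continuous_id.max continuous_const)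
      (fun x => Set.mem_Ici.2 (le_max_right _ _))
  set g : ℝ → ℝ := fun τ => Et τ * w (Et τ) with hg_def
  have hgcont : Continuous g := by
    refine hEtcont.mul (hwcont.comp_continuous hEtcont ?_)
    intro x
    exact hErange _ (le_max_right _ _)
  have hgE : ∀ τ ≥ (0:ℝ), g τ = E τ * w (E τ) := by
    intro τ hτ; simp [hg_def, hEt_def, max_eq_left hτ]
  have hgnn : ∀ τ, 0 ≤ g τ := by
    intro τ
    exact mul_nonneg (hEnn _ (le_max_right _ _)) (hwnn _ (hErange _ (le_max_right _ _)))
  -- the auxiliary function f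
  set I : ℝ := ∫ τ in Set.Ioi (0:ℝ), E τ * w (E τ) with hI_def
  set f : ℝ → ℝ := fun S => (1/M) * (I - ∫ τ in (0:ℝ)..S, g τ) with hf_def
  have hfderiv : ∀ S : ℝ, HasDerivAt f (-(1/M) * g S) S := by
    intro S
    have hP : HasDerivAt (fun u => ∫ τ in (0:ℝ)..u, g τ) (g S) S :=
      intervalIntegral.integral_hasDerivAt_right (hgcont.intervalIntegrable 0 S)
        (hgcont.stronglyMeasurableAtFilter _ _) hgcont.continuousAt
    have := ((hasDerivAt_const S I).sub hP).const_mul (1/M)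
    simpa [hf_def, mul_comm, mul_left_comm] using this
  have hfcont : Continuous f := by
    have h1 : Continuous fun b => ∫ x in (0:ℝ)..b, g x :=
      intervalIntegral.continuous_primitive (fun a b => hgcont.intervalIntegrable a b) 0
    exact continuous_const.mul (continuous_const.sub h1)
  have hfmono : ∀ a b : ℝ, a ≤ b → f b ≤ f a := by
    intro a b hab
    have h1 : (∫ τ in (0:ℝ)..b, g τ) - ∫ τ in (0:ℝ)..a, g τ = ∫ τ in a..b, g τ :=
      intervalIntegral.integral_interval_sub_left (hgcont.intervalIntegrable 0 b)
        (hgcont.intervalIntegrable 0 a)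
    have h2 : 0 ≤ ∫ τ in a..b, g τ :=
      intervalIntegral.integral_nonneg hab (fun x _ => hgnn x)
    have h3 : (∫ τ in (0:ℝ)..a, g τ) ≤ ∫ τ in (0:ℝ)..b, g τ := by linarith
    have hM' : 0 ≤ 1/M := by positivity
    simp only [hf_def]
    nlinarith
  have hfS : ∀ S : ℝ, 0 ≤ S → M * f S = ∫ τ in Set.Ioi S, E τ * w (E τ) := by
    intro S hS
    have hsplit : I = (∫ τ in Set.Ioc 0 S, E τ * w (E τ)) +
        ∫ τ in Set.Ioi S, E τ * w (E τ) := by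
      rw [hI_def, ← MeasureTheory.setIntegral_union]
      · rw [Set.Ioc_union_Ioi_eq_Ioi hS]
      · rw [Set.disjoint_left]; rintro x ⟨_, hx2⟩ hx3; exact absurd hx3 (not_lt.2 hx2)
      · exact measurableSet_Ioi
      · exact hInt0.mono_set Set.Ioc_subset_Ioi_self
      · exact hInt0.mono_set (fun x hx => lt_of_le_of_lt hS hx)
    have hgint : (∫ τ in (0:ℝ)..S, g τ) = ∫ τ in Set.Ioc 0 S, E τ * w (E τ) := by
      rw [intervalIntegral.integral_of_le hS]
      refine MeasureTheory.setIntegral_congr_fun measurableSet_Ioc ?_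
      intro x hx
      exact hgE x hx.1.le
    rw [hf_def]
    field_simp
    rw [hgint, hsplit]
    ring
  have hfle : ∀ S : ℝ, 0 ≤ S → f S ≤ E S := by
    intro S hS
    have h1 : M * f S ≤ M * E S := by rw [hfS S hS]; exact hup S hS
    exact le_of_mul_le_mul_left h1 hM
  have hf0r : f 0 ≤ r := by
    have : f 0 = (1/M) * I := by simp [hf_def]
    rw [this]; exact hrcond
  -- facts about G, K
  set G : ℝ → ℝ := fun y => 1 / (y * w y) with hG_def
  have hGcont : ∀ a b : ℝ, 0 < a → b < η → ContinuousOn G (Set.Icc a b) := by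
    intro a b ha hb
    have hsub : Set.Icc a b ⊆ Set.Ico 0 η :=
      fun y hy => ⟨(ha.trans_le hy.1).le, lt_of_le_of_lt hy.2 hb⟩
    refine continuousOn_const.div (continuousOn_id.mul (hwcont.mono hsub)) ?_
    intro y hy
    have hy0 : 0 < y := ha.trans_le hy.1
    have : 0 < w y := hwpos y (hsub hy) hy0
    positivity
  have hGnn : ∀ y : ℝ, 0 < y → y < η → 0 ≤ G y := by
    intro y hy1 hy2
    have : 0 < w y := hwpos y ⟨hy1.le, hy2⟩ hy1
    simp only [hG_def]
    positivity
  have hGint : ∀ a b : ℝ, 0 < a → a ≤ b → b < η → IntervalIntegrable G volume a b := by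
    intro a b ha hab hb
    have h := hGcont a b ha hb
    rw [← Set.uIcc_of_le hab] at h
    exact h.intervalIntegrable
  have hKdiff : ∀ a b : ℝ, 0 < a → a ≤ b → b ≤ r → K a - K b = ∫ y in a..b, G y := by
    intro a b ha hab hbr
    rw [hK a ⟨ha, hab.trans hbr⟩, hK b ⟨ha.trans_le hab, hbr⟩]
    have h1 : IntervalIntegrable G volume a b := hGint a b ha hab (lt_of_le_of_lt hbr hrη)
    have h2 : IntervalIntegrable G volume b r := hGint b r (ha.trans_le hab) hbr hrη
    have h3 := intervalIntegral.integral_add_adjacent_intervals h1 h2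
    have hKa : (∫ y in a..r, G y) = ∫ y in a..r, 1 / (y * w y) := rfl
    linarith [h3]
  have hKnn : ∀ a : ℝ, 0 < a → a ≤ r → 0 ≤ K a := by
    intro a ha har
    rw [hK a ⟨ha, har⟩]
    refine intervalIntegral.integral_nonneg har ?_
    intro y hy
    exact hGnn y (ha.trans_le hy.1) (lt_of_le_of_lt hy.2 hrη)
  have hKmono : ∀ a b : ℝ, 0 < a → a ≤ b → b ≤ r → K b ≤ K a := by
    intro a b ha hab hbr
    have h1 := hKdiff a b ha hab hbr
    have h2 : 0 ≤ ∫ y in a..b, G y :=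
      intervalIntegral.integral_nonneg hab
        (fun y hy => hGnn y (ha.trans_le hy.1) (lt_of_le_of_lt (hy.2.trans hbr) hrη))
    linarith
  have hwrinv : (0:ℝ) < 1 / w r := by positivity
  -- winv (1/z) lies in (0, r] for z ≥ 1/w r
  have hτfact : ∀ z : ℝ, 1 / w r ≤ z → winv (1/z) ∈ Set.Ioc (0:ℝ) r ∧ w (winv (1/z)) = 1/z := by
    intro z hz
    have hz0 : 0 < z := lt_of_lt_of_le hwrinv hz
    have hinvz : 0 < 1/z := by positivity
    have hinvz_le : 1/z ≤ w r := by
      have := one_div_le_one_div_of_le hwrinv hz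
      rwa [one_div_one_div] at this
    have hmem := hwinv_mem (1/z) hinvz.le
    have hwτ : w (winv (1/z)) = 1/z := hwinv_right (1/z) hinvz.le
    have hτpos : 0 < winv (1/z) := by
      rcases lt_or_eq_of_le hmem.1 with h | h
      · exact h
      · exfalso; rw [← h, hw0] at hwτ; linarith
    have hτr : winv (1/z) ≤ r := hwle _ hmem _ hrmem (by rw [hwτ]; exact hinvz_le)
    exact ⟨⟨hτpos, hτr⟩, hwτ⟩
  -- ψ is strictly monotone on [1/w r, ∞)
  have hψmono : ∀ z₁ z₂ : ℝ, 1 / w r ≤ z₁ → z₁ < z₂ → ψ z₁ < ψ z₂ := by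
    intro z₁ z₂ hz₁ h12
    have hz₁0 : 0 < z₁ := lt_of_lt_of_le hwrinv hz₁
    have hz₂0 : 0 < z₂ := hz₁0.trans h12
    obtain ⟨hτ1mem, hτ1w⟩ := hτfact z₁ hz₁
    obtain ⟨hτ2mem, hτ2w⟩ := hτfact z₂ (hz₁.trans h12.le)
    have hτ21 : winv (1/z₂) ≤ winv (1/z₁) := by
      refine hwle _ (hwinv_mem _ (one_div_nonneg.mpr hz₂0.le)) _
        (hwinv_mem _ (one_div_nonneg.mpr hz₁0.le)) ?_
      rw [hτ1w, hτ2w]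
      exact one_div_le_one_div_of_le hz₁0 h12.le
    have hKle : K (winv (1/z₁)) ≤ K (winv (1/z₂)) :=
      hKmono _ _ hτ2mem.1 hτ21 hτ1mem.2
    rw [hψ z₁ hz₁, hψ z₂ (hz₁.trans h12.le)]
    linarith
  -- ψinv maps [1/w r, ∞) into [1/w r, ∞)
  have hψinvge : ∀ y : ℝ, 1 / w r ≤ y → 1 / w r ≤ ψinv y := by
    intro y hy
    have hy0 : 0 < y := lt_of_lt_of_le hwrinv hy
    have hmin : 0 < min (1/y) (w r) := lt_min (by positivity) hwr
    set b0 : ℝ := min (1/y) (w r) / 2 with hb0_def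
    have hb00 : 0 < b0 := by positivity
    set a := winv b0 with ha_def
    have ha_mem : a ∈ Set.Ico 0 η := hwinv_mem b0 hb00.le
    have hwa : w a = b0 := hwinv_right b0 hb00.le
    have ha0 : 0 < a := by
      rcases lt_or_eq_of_le ha_mem.1 with h | h
      · exact h
      · exfalso; rw [← h, hw0] at hwa; linarith
    have har : a ≤ r := by
      refine hwle _ ha_mem _ hrmem ?_
      rw [hwa]
      have h1 := min_le_right (1/y) (w r)
      have : b0 ≤ w r / 2 := by rw [hb0_def]; linarith
      linarith
    have hwa_lt : w a < 1/y := by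
      rw [hwa]
      have h1 : b0 ≤ (1/y) / 2 := by
        rw [hb0_def]
        have := min_le_left (1/y) (w r)
        linarith
      have : 0 < 1/y := by positivity
      linarith
    set φ : ℝ → ℝ := fun τ => 1 / w τ + K τ with hφ_def
    have hφcont : ContinuousOn φ (Set.Icc a r) := by
      have hsub : Set.Icc a r ⊆ Set.Ico 0 η :=
        fun y hy => ⟨(ha0.trans_le hy.1).le, lt_of_le_of_lt hy.2 hrη⟩
      have h1 : ContinuousOn (fun τ => 1 / w τ) (Set.Icc a r) := by
        refine continuousOn_const.div (hwcont.mono hsub) ?_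
        intro y hy
        exact ne_of_gt (hwpos y (hsub hy) (ha0.trans_le hy.1))
      have h2 : ContinuousOn K (Set.Icc a r) := by
        have hint : IntegrableOn G (Set.uIcc a r) volume := by
          rw [Set.uIcc_of_le har]
          exact (hGcont a r ha0 hrη).integrableOn_compact isCompact_Icc
        have h3 := intervalIntegral.continuousOn_primitive_interval_left hint
        rw [Set.uIcc_of_le har] at h3
        refine h3.congr ?_
        intro τ hτ
        exact hK τ ⟨ha0.trans_le hτ.1, hτ.2⟩
      exact h1.add h2
    have hφr : φ r = 1 / w r := by
      simp only [hφ_def]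
      rw [hK r ⟨hr0, le_rfl⟩, intervalIntegral.integral_same, add_zero]
    have hφa : y ≤ φ a := by
      have hwa0 : 0 < w a := hwpos a ha_mem ha0
      have h1 : y < 1 / w a := by
        have := one_div_lt_one_div_of_lt hwa0 hwa_lt
        rwa [one_div_one_div] at this
      have h2 : 0 ≤ K a := hKnn a ha0 har
      simp only [hφ_def]
      linarith
    have hy_mem : y ∈ Set.Icc (φ r) (φ a) := ⟨by rw [hφr]; exact hy, hφa⟩
    obtain ⟨τ, hτmem, hφτ⟩ := intermediate_value_Icc' har hφcont hy_mem
    have hτ0 : 0 < τ := ha0.trans_le hτmem.1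
    have hτη : τ < η := lt_of_le_of_lt hτmem.2 hrη
    have hwτpos : 0 < w τ := hwpos τ ⟨hτ0.le, hτη⟩ hτ0
    have hwτr : w τ ≤ w r := hwmono.monotoneOn ⟨hτ0.le, hτη⟩ hrmem hτmem.2
    have hz : 1 / w r ≤ 1 / w τ := one_div_le_one_div_of_le hwτpos hwτr
    have hψz : ψ (1 / w τ) = y := by
      rw [hψ _ hz, one_div_one_div, hwinv_left τ ⟨hτ0.le, hτη⟩]
      exact hφτ
    rw [← hψz, hψinv_left _ hz]
    exact hz
  -- E is eventually below r
  have hEtr : ∀ t : ℝ, M / w r ≤ t → E t ≤ r := by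
    intro t ht
    have htpos : 0 < t := lt_of_lt_of_le (by positivity) ht
    by_contra h
    push_neg at h
    have hEt := hErange t htpos.le
    have h1 := hlow 0 t le_rfl htpos.le
    have h2 := hIoiBound 0 t le_rfl htpos.le
    rw [← hI_def] at h2
    have h3 : I ≤ M * r := by
      have h := mul_le_mul_of_nonneg_left hrcond hM.le
      have h' : M * (1/M * I) = I := by field_simp
      linarith
    have hwEt : w r < w (E t) := hwmono hrmem hEt h
    have h4 : t * (E t * w (E t)) ≤ M * r := by nlinarith [h1, h2, h3]
    have h5 : r * w r < E t * w (E t) :=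
      mul_lt_mul h hwEt.le hwr (hEnn t htpos.le)
    have h6 : M / w r * (r * w r) = M * r := by field_simp
    have h7 : M / w r * (r * w r) < t * (E t * w (E t)) := by
      have ha : 0 < M / w r := by positivity
      calc M / w r * (r * w r) < M / w r * (E t * w (E t)) :=
            mul_lt_mul_of_pos_left h5 ha
        _ ≤ t * (E t * w (E t)) :=
            mul_le_mul_of_nonneg_right ht
              (mul_nonneg (hEnn t htpos.le) (hwnn _ hEt))
    linarith
  -- the convergence to 0
  have htend : Tendsto E atTop (nhds 0) := by
    rw [Metric.tendsto_atTop]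
    intro ε hε
    set ε₀ : ℝ := min ε r with hε₀_def
    have hε₀0 : 0 < ε₀ := lt_min hε hr0
    have hε₀η : ε₀ < η := lt_of_le_of_lt (min_le_right _ _) hrη
    have hwε : 0 < w ε₀ := hwpos ε₀ ⟨hε₀0.le, hε₀η⟩ hε₀0
    have hc : 0 < ε₀ * w ε₀ := by positivity
    refine ⟨max 1 (M * E 0 / (ε₀ * w ε₀) + 1), fun n hn => ?_⟩
    have hn1 : (1:ℝ) ≤ n := le_trans (le_max_left _ _) hn
    have hn0 : 0 < n := by linarith
    have hEn : E n < ε₀ := by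
      by_contra h
      push_neg at h
      have hEnmem := hErange n hn0.le
      have h1 := hlow 0 n le_rfl hn0.le
      have h2 : (∫ τ in (0:ℝ)..n, E τ * w (E τ)) ≤ M * E 0 := by
        have := hIneq 0 n le_rfl hn0.le
        simpa [mul_comm] using this
      have h3 : ε₀ * w ε₀ ≤ E n * w (E n) :=
        mul_le_mul h (hwmono.monotoneOn ⟨hε₀0.le, hε₀η⟩ hEnmem h) hwε.le
          (hEnn n hn0.le)
      have h4 : n * (ε₀ * w ε₀) ≤ M * E 0 := by nlinarith [h1, h2, h3]
      have h5 : M * E 0 / (ε₀ * w ε₀) + 1 ≤ n := le_trans (le_max_right _ _) hn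
      have h6 : M * E 0 / (ε₀ * w ε₀) * (ε₀ * w ε₀) = M * E 0 := by field_simp
      nlinarith [mul_le_mul_of_nonneg_right h5 hc.le]
    rw [Real.dist_eq, sub_zero, abs_of_nonneg (hEnn n hn0.le)]
    exact lt_of_lt_of_le hEn (min_le_left _ _)
  refine ⟨fun t ht => ?_, htend⟩
  have htpos : 0 < t := lt_of_lt_of_le (by positivity) ht
  have htM : 1 / w r ≤ t / M := by
    have h1 : 1 / w r * M = M / w r := by ring
    rw [le_div_iff₀ hM, h1]
    exact ht
  have hz₀ : 1 / w r ≤ ψinv (t / M) := hψinvge _ htM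
  have hz₀0 : 0 < ψinv (t / M) := lt_of_lt_of_le hwrinv hz₀
  have hEt := hErange t htpos.le
  rcases eq_or_lt_of_le (hEnn t htpos.le) with he | he
  · rw [← he]
    exact (hwinv_mem _ (one_div_nonneg.mpr hz₀0.le)).1
  · have her : E t ≤ r := hEtr t ht
    have hwe : 0 < w (E t) := hwpos _ hEt he
    have hwer : w (E t) ≤ w r := hwmono.monotoneOn hEt hrmem her
    have hze : 1 / w r ≤ 1 / w (E t) := one_div_le_one_div_of_le hwe hwer
    -- the main decay estimate
    have hmain : t ≤ M / w (E t) + M * K (E t) := by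
      set S : ℝ := t - M / w (E t) with hS_def
      rcases le_or_gt S 0 with hS | hS
      · have hKe : 0 ≤ K (E t) := hKnn _ he her
        have h1 : t ≤ M / w (E t) := by rw [hS_def] at hS; linarith
        nlinarith
      · have hSt : S ≤ t := by
          have h0 : 0 < M / w (E t) := by positivity
          rw [hS_def]; linarith
        -- E t ≤ f S
        have hefS : E t ≤ f S := by
          have h1 := hlow S t hS.le hSt
          have h2 := hIoiBound S t hS.le hSt
          have h3 := hfS S hS.le
          have h4 : t - S = M / w (E t) := by rw [hS_def]; ring
          rw [h4] at h1
          have h5 : M / w (E t) * (E t * w (E t)) = M * E t := by field_simp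
          rw [h5] at h1
          have h6 : M * E t ≤ M * f S := by linarith
          exact le_of_mul_le_mul_left h6 hM
        have hfSpos : 0 < f S := lt_of_lt_of_le he hefS
        have hfS0 : f S ≤ f 0 := hfmono 0 S hS.le
        have hfSr : f S ≤ r := hfS0.trans hf0r
        have hf0pos : 0 < f 0 := lt_of_lt_of_le hfSpos hfS0
        have hf0η : f 0 < η := lt_of_le_of_lt hf0r hrη
        have himage : ∀ x ∈ Set.uIcc (0:ℝ) S, f x ∈ Set.Icc (f S) (f 0) := by
          intro x hx
          rw [Set.uIcc_of_le hS.le] at hx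
          exact ⟨hfmono x S hx.2, hfmono 0 x hx.1⟩
        have hGcont' : ContinuousOn G (f '' Set.uIcc (0:ℝ) S) := by
          refine (hGcont (f S) (f 0) hfSpos hf0η).mono ?_
          rintro _ ⟨x, hx, rfl⟩
          exact himage x hx
        have hsub := intervalIntegral.integral_comp_smul_deriv'
          (a := (0:ℝ)) (b := S) (f := f) (f' := fun x => -(1/M) * g x) (g := G)
          (fun x _ => hfderiv x)
          ((continuous_const.mul hgcont).continuousOn) hGcont'
        -- pointwise bound on the substituted integrand
        have hpoint : ∀ x ∈ Set.Icc (0:ℝ) S,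
            ((fun x => -(1/M) * g x) x) • (G ∘ f) x ≤ -(1/M) := by
          intro x hx
          have hfx1 : f S ≤ f x := hfmono x S hx.2
          have hfx2 : f x ≤ f 0 := hfmono 0 x hx.1
          have hfx0 : 0 < f x := lt_of_lt_of_le hfSpos hfx1
          have hfxr : f x ≤ r := hfx2.trans hf0r
          have hfxη : f x < η := lt_of_le_of_lt hfxr hrη
          have hwfx : 0 < w (f x) := hwpos _ ⟨hfx0.le, hfxη⟩ hfx0
          have hEfx : f x ≤ E x := hfle x hx.1
          have hgx : f x * w (f x) ≤ g x := by
            rw [hgE x hx.1]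
            exact mul_le_mul hEfx
              (hwmono.monotoneOn ⟨hfx0.le, hfxη⟩ (hErange x hx.1) hEfx)
              hwfx.le (hEnn x hx.1)
          have hfw : 0 < f x * w (f x) := by positivity
          have hprod : 1 ≤ g x * G (f x) := by
            have h := (one_le_div hfw).mpr hgx
            rw [div_eq_mul_one_div] at h
            exact h
          have hM0 : (0:ℝ) < 1/M := by positivity
          have h := mul_le_mul_of_nonneg_left hprod hM0.le
          simp only [Function.comp_apply, smul_eq_mul]
          nlinarith
        have hcontI : ContinuousOn
            (fun x => ((fun x => -(1/M) * g x) x) • (G ∘ f) x) (Set.Icc (0:ℝ) S) := by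
          refine ContinuousOn.smul ((continuous_const.mul hgcont).continuousOn) ?_
          refine (hGcont (f S) (f 0) hfSpos hf0η).comp hfcont.continuousOn ?_
          intro x hx
          exact himage x (by rwa [Set.uIcc_of_le hS.le])
        have hLHS : (∫ x in (0:ℝ)..S, ((fun x => -(1/M) * g x) x) • (G ∘ f) x)
            ≤ -(1/M) * S := by
          have h1 : (∫ _ in (0:ℝ)..S, (-(1/M):ℝ)) = -(1/M) * S := by
            rw [intervalIntegral.integral_const, smul_eq_mul]; ring
          rw [← h1]
          refine intervalIntegral.integral_mono_on hS.le ?_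
            intervalIntegrable_const hpoint
          have := hcontI
          rw [← Set.uIcc_of_le hS.le] at this
          exact this.intervalIntegrable
        have hKf : K (f S) - K (f 0) = ∫ y in (f S)..(f 0), G y :=
          hKdiff _ _ hfSpos hfS0 hf0r
        have hRHS : (∫ u in (f 0)..(f S), G u) = -(K (f S) - K (f 0)) := by
          rw [intervalIntegral.integral_symm, hKf]
        rw [hsub, hRHS] at hLHS
        -- K (f S) ≥ K (f 0) + S/M
        have hKf0 : 0 ≤ K (f 0) := hKnn _ hf0pos hf0r
        have hKE : K (f S) ≤ K (E t) := hKmono (E t) (f S) he hefS hfSr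
        have hfin : (1/M) * S ≤ K (E t) := by linarith
        rw [hS_def] at hfin
        have h9 : M * (1/M * (t - M / w (E t))) = t - M / w (E t) := by
          field_simp
        linarith [mul_le_mul_of_nonneg_left hfin hM.le, h9]
    -- translate into the ψ-form
    have hψe : t / M ≤ ψ (1 / w (E t)) := by
      rw [hψ _ hze, one_div_one_div, hwinv_left (E t) hEt, div_le_iff₀ hM]
      calc t ≤ M / w (E t) + M * K (E t) := hmain
        _ = (1 / w (E t) + K (E t)) * M := by ring
    have hz₀e : ψinv (t / M) ≤ 1 / w (E t) := by
      by_contra h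
      push_neg at h
      have h2 := hψmono _ _ hze h
      rw [hψinv_right _ htM] at h2
      linarith
    have hwez : w (E t) ≤ 1 / ψinv (t / M) := by
      have h := one_div_le_one_div_of_le hz₀0 hz₀e
      rwa [one_div_one_div] at h
    have h := hwinvmono _ _ (hwnn _ hEt) hwez
    rwa [hwinv_left (E t) hEt] at h
end
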